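/- arXiv:2603.17188 — 3 statements merged into one kernel-verified Lean document; each statement's English description precedes it below -/
import Mathlib

section
/- Let A be a finite nonempty alphabet, let (p_n)_{n≥0} be a sequence of probability vectors on A converging pointwise to a probability vector p̄ with p̄(a) > 0 for every a ∈ A. Then for every aperiodic language L ⊆ A*, there exists a real number d such that both μ_{p̄}(L ∩ A^n) → d and μ_{p_n}(L ∩ A^n) → d as n → ∞; that is, the sequential density of L exists in the strong sense and equals the strong density of L with respect to μ_{p̄}. -/
open Filter
open scoped Classical

/-- The measure of `L ∩ A^i` under the Bernoulli measure associated with the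
probability vector `p : A → ℝ`. -/
noncomputable def bernoulliLangMeasure {A : Type*} [Fintype A]
    (p : A → ℝ) (L : Set (List A)) (i : ℕ) : ℝ :=
  ∑ w : Fin i → A, if List.ofFn w ∈ L then ∏ j, p (w j) else 0

/-- A language `L ⊆ A*` is aperiodic if it is recognized by a morphism onto some
finite aperiodic monoid, i.e. a finite monoid `M` such that `m ^ n = m ^ (n + 1)`
for some `n ≥ 1` and all `m ∈ M`. -/
def IsAperiodicLang {A : Type} (L : Set (List A)) : Prop :=
  ∃ (M : Type) (_ : Monoid M) (_ : Fintype M) (φ : FreeMonoid A →* M) (N : Set M),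
    (∃ n : ℕ, 1 ≤ n ∧ ∀ m : M, m ^ n = m ^ (n + 1)) ∧
    L = {w : List A | φ (FreeMonoid.ofList w) ∈ N}

set_option linter.unusedSectionVars false

namespace SDPaux

variable {A : Type} [Fintype A] [Nonempty A] {M : Type} [Monoid M] [Fintype M]

def prodg (g : A → M) (w : List A) : M := (w.map g).prod

@[simp] lemma prodg_nil (g : A → M) : prodg g [] = 1 := rfl

@[simp] lemma prodg_cons (g : A → M) (a : A) (w : List A) :
    prodg g (a :: w) = g a * prodg g w := by simp [prodg]

lemma prodg_append (g : A → M) (w v : List A) :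
    prodg g (w ++ v) = prodg g w * prodg g v := by simp [prodg]

lemma prodg_replicate (g : A → M) (a : A) (x : ℕ) :
    prodg g (List.replicate x a) = g a ^ x := by simp [prodg]

def Reach (g : A → M) (m m' : M) : Prop := ∃ w : List A, m * prodg g w = m'

lemma reach_refl (g : A → M) (m : M) : Reach g m m := ⟨[], by simp⟩

lemma reach_trans {g : A → M} {m m' m'' : M} (h1 : Reach g m m') (h2 : Reach g m' m'') :
    Reach g m m'' := by
  obtain ⟨w1, hw1⟩ := h1; obtain ⟨w2, hw2⟩ := h2
  exact ⟨w1 ++ w2, by rw [prodg_append, ← mul_assoc, hw1, hw2]⟩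

lemma reach_word (g : A → M) (m : M) (w : List A) : Reach g m (m * prodg g w) := ⟨w, rfl⟩

def IsRec (g : A → M) (m : M) : Prop := ∀ m', Reach g m m' → Reach g m' m

lemma isRec_of_reach {g : A → M} {m x : M} (hm : IsRec g m) (hx : Reach g m x) :
    IsRec g x := by
  intro y hy
  exact reach_trans (hm y (reach_trans hx hy)) hx

noncomputable def ReachSet (g : A → M) (m : M) : Finset M :=
  Finset.univ.filter (fun m' => Reach g m m')

lemma exists_rec_reach_aux (g : A → M) :
    ∀ k (m : M), (ReachSet g m).card ≤ k → ∃ w, IsRec g (m * prodg g w) := by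
  intro k
  induction k with
  | zero =>
    intro m hm
    exfalso
    have : m ∈ ReachSet g m := by simp [ReachSet, reach_refl]
    have := Finset.card_pos.2 ⟨m, this⟩
    omega
  | succ k ih =>
    intro m hm
    by_cases h : IsRec g m
    · exact ⟨[], by simpa using h⟩
    · simp only [IsRec, not_forall] at h
      obtain ⟨m', hr, hnr⟩ := h
      have hsub : ReachSet g m' ⊆ ReachSet g m := by
        intro x hx
        simp only [ReachSet, Finset.mem_filter, Finset.mem_univ, true_and] at hx ⊢
        exact reach_trans hr hx
      have hss : ReachSet g m' ⊂ ReachSet g m := by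
        refine ⟨hsub, fun hsub' => ?_⟩
        have : m ∈ ReachSet g m' := hsub' (by simp [ReachSet, reach_refl])
        simp only [ReachSet, Finset.mem_filter, Finset.mem_univ, true_and] at this
        exact hnr this
      have hcard : (ReachSet g m').card ≤ k := by
        have := Finset.card_lt_card hss
        omega
      obtain ⟨w', hw'⟩ := ih m' hcard
      obtain ⟨w0, hw0⟩ := hr
      exact ⟨w0 ++ w', by rw [prodg_append, ← mul_assoc, hw0]; exact hw'⟩

lemma exists_rec_reach (g : A → M) (m : M) : ∃ w, IsRec g (m * prodg g w) :=
  exists_rec_reach_aux g (ReachSet g m).card m le_rfl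

/-- uniform length words to recurrent states -/
lemma exists_k0 (g : A → M) :
    ∃ k₀ : ℕ, 1 ≤ k₀ ∧ ∀ m : M, ∃ w : List A, w.length = k₀ ∧ IsRec g (m * prodg g w) := by
  choose w hw using exists_rec_reach g
  obtain ⟨a₀⟩ := (inferInstance : Nonempty A)
  refine ⟨1 + Finset.univ.sup (fun m => (w m).length), Nat.le_add_right 1 _, fun m => ?_⟩
  set K := 1 + Finset.univ.sup (fun m => (w m).length) with hK
  have hle : (w m).length ≤ K := by
    have h1 : (w m).length ≤ Finset.univ.sup (fun m => (w m).length) := by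
      simpa using Finset.le_sup (f := fun m => (w m).length) (Finset.mem_univ m)
    omega
  refine ⟨w m ++ List.replicate (K - (w m).length) a₀, ?_, ?_⟩
  · simp only [List.length_append, List.length_replicate]; omega
  · rw [prodg_append, ← mul_assoc]
    exact isRec_of_reach (hw m) (reach_word g _ _)

end SDPaux

namespace SDPaux

variable {A : Type} [Fintype A] [Nonempty A] {M : Type} [Monoid M] [Fintype M]

lemma nat_rep (α j : ℕ) (h1 : 1 ≤ α) (h2 : α * α ≤ j) :
    ∃ x y : ℕ, j = x * α + y * (α + 1) := by
  have hmod := Nat.div_add_mod j α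
  have hr : j % α < α := Nat.mod_lt _ h1
  have hq : α ≤ j / α := (Nat.le_div_iff_mul_le h1).2 h2
  refine ⟨j / α - j % α, j % α, ?_⟩
  have h3 : j % α ≤ j / α := le_of_lt (lt_of_lt_of_le hr hq)
  obtain ⟨d, hd⟩ := Nat.exists_eq_add_of_le h3
  rw [hd]
  have : (j % α + d - j % α) = d := by omega
  rw [this]
  nlinarith [hmod]

lemma loop_pow {g : A → M} {m : M} {u : List A} (hu : m * prodg g u = m) (x : ℕ) :
    ∃ v : List A, v.length = x * u.length ∧ m * prodg g v = m := by
  induction x with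
  | zero => exact ⟨[], by simp⟩
  | succ x ih =>
    obtain ⟨v, hv1, hv2⟩ := ih
    refine ⟨u ++ v, ?_, ?_⟩
    · simp [hv1]; ring
    · rw [prodg_append, ← mul_assoc, hu, hv2]

/-- at a recurrent state there are loops of two consecutive lengths -/
lemma exists_loops {g : A → M} {n₀ : ℕ} (hn₀ : 1 ≤ n₀) (hap : ∀ m : M, m ^ n₀ = m ^ (n₀ + 1))
    {m : M} (hm : IsRec g m) :
    ∃ α : ℕ, 1 ≤ α ∧ ∃ u v : List A, u.length = α ∧ v.length = α + 1 ∧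
      m * prodg g u = m ∧ m * prodg g v = m := by
  obtain ⟨a₀⟩ := (inferInstance : Nonempty A)
  have hx : Reach g m (m * (g a₀) ^ n₀) := by
    refine ⟨List.replicate n₀ a₀, by rw [prodg_replicate]⟩
  obtain ⟨r, hr⟩ := hm _ hx
  refine ⟨n₀ + r.length, by omega, List.replicate n₀ a₀ ++ r, List.replicate (n₀+1) a₀ ++ r,
    ?_, ?_, ?_, ?_⟩
  · simp
  · simp; omega
  · rw [prodg_append, prodg_replicate, ← mul_assoc, hr]
  · rw [prodg_append, prodg_replicate, ← hap (g a₀), ← mul_assoc, hr]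

lemma exists_loop_len {g : A → M} {n₀ : ℕ} (hn₀ : 1 ≤ n₀) (hap : ∀ m : M, m ^ n₀ = m ^ (n₀ + 1))
    {m : M} (hm : IsRec g m) :
    ∃ B : ℕ, ∀ j, B ≤ j → ∃ w : List A, w.length = j ∧ m * prodg g w = m := by
  obtain ⟨α, hα, u, v, hu1, hv1, hu2, hv2⟩ := exists_loops hn₀ hap hm
  refine ⟨α * α, fun j hj => ?_⟩
  obtain ⟨x, y, hxy⟩ := nat_rep α j hα hj
  obtain ⟨w1, hw11, hw12⟩ := loop_pow hu2 x
  obtain ⟨w2, hw21, hw22⟩ := loop_pow hv2 y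
  refine ⟨w1 ++ w2, ?_, ?_⟩
  · simp [hw11, hw21, hu1, hv1, hxy]
  · rw [prodg_append, ← mul_assoc, hw12, hw22]

noncomputable def classFinset (g : A → M) (m : M) : Finset M :=
  Finset.univ.filter (fun m' => Reach g m m' ∧ Reach g m' m)

lemma mem_classFinset_self (g : A → M) (m : M) : m ∈ classFinset g m := by
  simp [classFinset, reach_refl]

lemma classFinset_congr {g : A → M} {m m' : M} (h1 : Reach g m m') (h2 : Reach g m' m) :
    classFinset g m = classFinset g m' := by
  ext x
  simp only [classFinset, Finset.mem_filter, Finset.mem_univ, true_and]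
  constructor
  · rintro ⟨a, b⟩; exact ⟨reach_trans h2 a, reach_trans b h1⟩
  · rintro ⟨a, b⟩; exact ⟨reach_trans h1 a, reach_trans b h2⟩

noncomputable def theta (g : A → M) (m : M) : M :=
  (Fintype.equivFin M).symm
    (((classFinset g m).image (Fintype.equivFin M)).min'
      (Finset.image_nonempty.2 ⟨m, mem_classFinset_self g m⟩))

lemma theta_mem (g : A → M) (m : M) : theta g m ∈ classFinset g m := by
  have h := Finset.min'_mem ((classFinset g m).image (Fintype.equivFin M))
    (Finset.image_nonempty.2 ⟨m, mem_classFinset_self g m⟩)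
  rw [Finset.mem_image] at h
  obtain ⟨b, hb, hbe⟩ := h
  have : theta g m = b := by rw [theta, ← hbe, Equiv.symm_apply_apply]
  rwa [this]

lemma theta_congr {g : A → M} {m m' : M} (h1 : Reach g m m') (h2 : Reach g m' m) :
    theta g m = theta g m' := by
  unfold theta
  simp only [classFinset_congr h1 h2]

lemma reach_theta (g : A → M) (m : M) : Reach g m (theta g m) := by
  have := theta_mem g m
  simp only [classFinset, Finset.mem_filter, Finset.mem_univ, true_and] at this
  exact this.1

lemma theta_reach (g : A → M) (m : M) : Reach g (theta g m) m := by
  have := theta_mem g m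
  simp only [classFinset, Finset.mem_filter, Finset.mem_univ, true_and] at this
  exact this.2

/-- uniform length words from recurrent states to their class representative -/
lemma exists_k1 (g : A → M) {n₀ : ℕ} (hn₀ : 1 ≤ n₀) (hap : ∀ m : M, m ^ n₀ = m ^ (n₀ + 1)) :
    ∃ k₁ : ℕ, 1 ≤ k₁ ∧ ∀ m : M, IsRec g m →
      ∃ w : List A, w.length = k₁ ∧ m * prodg g w = theta g m := by
  have hdata : ∀ m : M, ∃ (B : ℕ) (w₂ : List A), IsRec g m →
      ((∀ j, B ≤ j → ∃ w : List A, w.length = j ∧ m * prodg g w = m) ∧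
        m * prodg g w₂ = theta g m) := by
    intro m
    by_cases hm : IsRec g m
    · obtain ⟨B, hB⟩ := exists_loop_len hn₀ hap hm
      obtain ⟨w₂, hw₂⟩ := reach_theta g m
      exact ⟨B, w₂, fun _ => ⟨hB, hw₂⟩⟩
    · exact ⟨0, [], fun h => absurd h hm⟩
  choose B w₂ hBw using hdata
  set K := 1 + Finset.univ.sup (fun m => B m + (w₂ m).length) with hK
  refine ⟨K, Nat.le_add_right 1 _, fun m hm => ?_⟩
  have hle : B m + (w₂ m).length ≤ Finset.univ.sup (fun m => B m + (w₂ m).length) := by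
    simpa using Finset.le_sup (f := fun m => B m + (w₂ m).length) (Finset.mem_univ m)
  obtain ⟨hloop, hw2⟩ := hBw m hm
  obtain ⟨w, hw1, hwm⟩ := hloop (K - (w₂ m).length) (by omega)
  refine ⟨w ++ w₂ m, ?_, ?_⟩
  · simp [hw1]; omega
  · rw [prodg_append, ← mul_assoc, hwm, hw2]

/-- recurrence is preserved by one step, and theta is constant along steps within a
recurrent class -/
lemma isRec_step {g : A → M} {m : M} (hm : IsRec g m) (a : A) : IsRec g (m * g a) :=
  isRec_of_reach hm ⟨[a], by simp⟩

lemma theta_step {g : A → M} {m : M} (hm : IsRec g m) (a : A) :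
    theta g (m * g a) = theta g m := by
  have h1 : Reach g m (m * g a) := ⟨[a], by simp⟩
  exact (theta_congr h1 (hm _ h1)).symm

end SDPaux

namespace SDPaux

variable {A : Type} [Fintype A] [Nonempty A] {M : Type} [Monoid M] [Fintype M]

noncomputable def Pm (g : A → M) (q : A → ℝ) : Matrix M M ℝ :=
  Matrix.of fun m m' => ∑ a, if m * g a = m' then q a else 0

lemma Pm_apply (g : A → M) (q : A → ℝ) (m m' : M) :
    Pm g q m m' = ∑ a, if m * g a = m' then q a else 0 := rfl

lemma Pm_nonneg {g : A → M} {q : A → ℝ} (hq0 : ∀ a, 0 ≤ q a) (m m' : M) :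
    0 ≤ Pm g q m m' :=
  Finset.sum_nonneg fun a _ => by split_ifs; exacts [hq0 a, le_refl 0]

lemma Pm_rowsum {g : A → M} {q : A → ℝ} (hq1 : ∑ a, q a = 1) (m : M) :
    ∑ m', Pm g q m m' = 1 := by
  simp only [Pm_apply]
  rw [Finset.sum_comm, ← hq1]
  refine Finset.sum_congr rfl fun a _ => ?_
  simp [Finset.sum_ite_eq]

lemma Ppow_nonneg {g : A → M} {q : A → ℝ} (hq0 : ∀ a, 0 ≤ q a) (k : ℕ) (m m' : M) :
    0 ≤ (Pm g q ^ k) m m' := by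
  induction k generalizing m' with
  | zero => rw [pow_zero, Matrix.one_apply]; split_ifs; exacts [zero_le_one, le_refl 0]
  | succ k ih =>
    rw [pow_succ, Matrix.mul_apply]
    exact Finset.sum_nonneg fun x _ => mul_nonneg (ih x) (Pm_nonneg hq0 x m')

lemma Ppow_rowsum {g : A → M} {q : A → ℝ} (hq1 : ∑ a, q a = 1) (k : ℕ) (m : M) :
    ∑ m', (Pm g q ^ k) m m' = 1 := by
  induction k with
  | zero => simp [Matrix.one_apply]
  | succ k ih =>
    rw [← ih, pow_succ]
    simp only [Matrix.mul_apply]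
    rw [Finset.sum_comm]
    refine Finset.sum_congr rfl fun m' _ => ?_
    rw [← Finset.mul_sum, Pm_rowsum hq1, mul_one]

lemma map_prod_nonneg {q : A → ℝ} (hq0 : ∀ a, 0 ≤ q a) (w : List A) :
    0 ≤ (w.map q).prod := by
  induction w with
  | nil => simp
  | cons a w ih => simp only [List.map_cons, List.prod_cons]; exact mul_nonneg (hq0 a) ih

lemma pow_le_map_prod {q : A → ℝ} {δ : ℝ} (hδ0 : 0 ≤ δ) (hδq : ∀ a, δ ≤ q a) (w : List A) :
    δ ^ w.length ≤ (w.map q).prod := by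
  induction w with
  | nil => simp
  | cons a w ih =>
    simp only [List.map_cons, List.prod_cons, List.length_cons]
    rw [pow_succ']
    exact mul_le_mul (hδq a) ih (pow_nonneg hδ0 _) (le_trans hδ0 (hδq a))

lemma Pm_ge {g : A → M} {q : A → ℝ} (hq0 : ∀ a, 0 ≤ q a) (m : M) (a : A) :
    q a ≤ Pm g q m (m * g a) := by
  rw [Pm_apply]
  have : q a = (if m * g a = m * g a then q a else 0) := by simp
  rw [this]
  exact Finset.single_le_sum (f := fun a' => if m * g a' = m * g a then q a' else 0)
    (fun a' _ => by split_ifs; exacts [hq0 a', le_refl 0]) (Finset.mem_univ a)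

lemma Ppow_word {g : A → M} {q : A → ℝ} (hq0 : ∀ a, 0 ≤ q a) (w : List A) (m : M) :
    (w.map q).prod ≤ (Pm g q ^ w.length) m (m * prodg g w) := by
  induction w generalizing m with
  | nil => simp [Matrix.one_apply_eq]
  | cons a w ih =>
    simp only [List.map_cons, List.prod_cons, List.length_cons, prodg_cons]
    rw [pow_succ', Matrix.mul_apply]
    have hpt : m * (g a * prodg g w) = (m * g a) * prodg g w := by rw [mul_assoc]
    rw [hpt]
    have hterm : q a * (w.map q).prod
        ≤ Pm g q m (m * g a) * (Pm g q ^ w.length) (m * g a) ((m * g a) * prodg g w) :=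
      mul_le_mul (Pm_ge hq0 m a) (ih (m * g a)) (map_prod_nonneg hq0 w)
        (le_trans (hq0 a) (Pm_ge hq0 m a))
    refine le_trans hterm ?_
    exact Finset.single_le_sum
      (f := fun x => Pm g q m x * (Pm g q ^ w.length) x ((m * g a) * prodg g w))
      (fun x _ => mul_nonneg (Pm_nonneg hq0 m x) (Ppow_nonneg hq0 _ x _))
      (Finset.mem_univ (m * g a))

lemma Pm_closed {g : A → M} {q : A → ℝ} {C : M → Prop} (hC : ∀ m, C m → ∀ a, C (m * g a))
    {m m' : M} (hm : C m) (hm' : ¬ C m') : Pm g q m m' = 0 := by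
  rw [Pm_apply]
  refine Finset.sum_eq_zero fun a _ => ?_
  rw [if_neg]
  intro h
  exact hm' (h ▸ hC m hm a)

lemma Ppow_closed {g : A → M} {q : A → ℝ} {C : M → Prop} (hC : ∀ m, C m → ∀ a, C (m * g a))
    (k : ℕ) {m m' : M} (hm : C m) (hm' : ¬ C m') : (Pm g q ^ k) m m' = 0 := by
  induction k generalizing m' with
  | zero =>
    rw [pow_zero]
    exact Matrix.one_apply_ne (fun h => hm' (h ▸ hm))
  | succ k ih =>
    rw [pow_succ, Matrix.mul_apply]
    refine Finset.sum_eq_zero fun x _ => ?_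
    by_cases hx : C x
    · rw [Pm_closed hC hx hm', mul_zero]
    · rw [ih hx, zero_mul]

lemma Ppow_closed_rowsum {g : A → M} {q : A → ℝ} (hq1 : ∑ a, q a = 1) {C : M → Prop}
    (hC : ∀ m, C m → ∀ a, C (m * g a)) (k : ℕ) {m : M} (hm : C m) :
    ∑ m', (if C m' then (Pm g q ^ k) m m' else 0) = 1 := by
  rw [← Ppow_rowsum hq1 k m]
  refine Finset.sum_congr rfl fun m' _ => ?_
  by_cases h : C m'
  · rw [if_pos h]
  · rw [if_neg h, Ppow_closed hC k hm h]

noncomputable def nu (g : A → M) (q : A → ℝ) (j : ℕ) : M → ℝ := fun m => (Pm g q ^ j) 1 m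

lemma nu_nonneg {g : A → M} {q : A → ℝ} (hq0 : ∀ a, 0 ≤ q a) (j : ℕ) (m : M) :
    0 ≤ nu g q j m := Ppow_nonneg hq0 j 1 m

lemma nu_total {g : A → M} {q : A → ℝ} (hq1 : ∑ a, q a = 1) (j : ℕ) :
    ∑ m, nu g q j m = 1 := Ppow_rowsum hq1 j 1

lemma nu_add (g : A → M) (q : A → ℝ) (j k : ℕ) (m' : M) :
    nu g q (j + k) m' = ∑ m, nu g q j m * (Pm g q ^ k) m m' := by
  rw [nu, pow_add, Matrix.mul_apply]; rfl

end SDPaux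

namespace SDPaux

variable {A : Type} [Fintype A] [Nonempty A] {M : Type} [Monoid M] [Fintype M]

lemma sum_if_nu_add (g : A → M) (q : A → ℝ) (C : M → Prop) (j k : ℕ) :
    ∑ m', (if C m' then nu g q (j + k) m' else 0)
      = ∑ m, nu g q j m * ∑ m', (if C m' then (Pm g q ^ k) m m' else 0) := by
  calc ∑ m', (if C m' then nu g q (j + k) m' else 0)
      = ∑ m', ∑ m, (if C m' then nu g q j m * (Pm g q ^ k) m m' else 0) := by
        refine Finset.sum_congr rfl fun m' _ => ?_
        by_cases h : C m'
        · simp only [if_pos h, nu_add]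
        · simp [h]
    _ = ∑ m, ∑ m', (if C m' then nu g q j m * (Pm g q ^ k) m m' else 0) := Finset.sum_comm
    _ = ∑ m, nu g q j m * ∑ m', (if C m' then (Pm g q ^ k) m m' else 0) := by
        refine Finset.sum_congr rfl fun m _ => ?_
        rw [Finset.mul_sum]
        exact Finset.sum_congr rfl fun m' _ => by rw [mul_ite, mul_zero]

lemma sum_if_nu_mono {g : A → M} {q : A → ℝ} (hq0 : ∀ a, 0 ≤ q a) (hq1 : ∑ a, q a = 1)
    {C : M → Prop} (hC : ∀ m, C m → ∀ a, C (m * g a)) (j k : ℕ) :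
    ∑ m, (if C m then nu g q j m else 0) ≤ ∑ m, (if C m then nu g q (j + k) m else 0) := by
  rw [sum_if_nu_add]
  refine Finset.sum_le_sum fun m _ => ?_
  by_cases h : C m
  · rw [if_pos h, Ppow_closed_rowsum hq1 hC k h, mul_one]
  · rw [if_neg h]
    exact mul_nonneg (nu_nonneg hq0 j m)
      (Finset.sum_nonneg fun m' _ => by
        split_ifs; exacts [Ppow_nonneg hq0 k m m', le_refl 0])

noncomputable def transMass (g : A → M) (q : A → ℝ) (j : ℕ) : ℝ :=
  ∑ m, if IsRec g m then 0 else nu g q j m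

lemma transMass_nonneg {g : A → M} {q : A → ℝ} (hq0 : ∀ a, 0 ≤ q a) (j : ℕ) :
    0 ≤ transMass g q j :=
  Finset.sum_nonneg fun m _ => by split_ifs; exacts [le_refl 0, nu_nonneg hq0 j m]

lemma recMass_add_transMass {g : A → M} {q : A → ℝ} (hq1 : ∑ a, q a = 1) (j : ℕ) :
    (∑ m, if IsRec g m then nu g q j m else 0) + transMass g q j = 1 := by
  rw [transMass, ← Finset.sum_add_distrib]
  rw [← nu_total (g := g) hq1 j]
  refine Finset.sum_congr rfl fun m _ => ?_
  split_ifs <;> simp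

lemma transMass_le_one {g : A → M} {q : A → ℝ} (hq0 : ∀ a, 0 ≤ q a) (hq1 : ∑ a, q a = 1)
    (j : ℕ) : transMass g q j ≤ 1 := by
  have h := recMass_add_transMass (g := g) (q := q) hq1 j
  have h2 : 0 ≤ ∑ m, if IsRec g m then nu g q j m else 0 :=
    Finset.sum_nonneg fun m _ => by split_ifs; exacts [nu_nonneg hq0 j m, le_refl 0]
  linarith

lemma isRec_closed (g : A → M) : ∀ m, IsRec g m → ∀ a, IsRec g (m * g a) :=
  fun m hm a => isRec_step hm a

lemma transMass_mono {g : A → M} {q : A → ℝ} (hq0 : ∀ a, 0 ≤ q a) (hq1 : ∑ a, q a = 1)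
    (j k : ℕ) : transMass g q (j + k) ≤ transMass g q j := by
  have h1 := recMass_add_transMass (g := g) (q := q) hq1 j
  have h2 := recMass_add_transMass (g := g) (q := q) hq1 (j + k)
  have h3 := sum_if_nu_mono hq0 hq1 (isRec_closed g) j k
  linarith

lemma transMass_mono' {g : A → M} {q : A → ℝ} (hq0 : ∀ a, 0 ≤ q a) (hq1 : ∑ a, q a = 1)
    {j j' : ℕ} (h : j ≤ j') : transMass g q j' ≤ transMass g q j := by
  have := transMass_mono hq0 hq1 (g := g) (q := q) j (j' - j)
  rwa [Nat.add_sub_cancel' h] at this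

lemma trans_decay {g : A → M} {q : A → ℝ} {δ : ℝ} (hδ0 : 0 < δ) (hδq : ∀ a, δ ≤ q a)
    (hq1 : ∑ a, q a = 1) {k₀ : ℕ}
    (hk₀ : ∀ m : M, ∃ w : List A, w.length = k₀ ∧ IsRec g (m * prodg g w)) (j : ℕ) :
    transMass g q (j + k₀) ≤ (1 - δ ^ k₀) * transMass g q j := by
  have hq0 : ∀ a, 0 ≤ q a := fun a => le_trans hδ0.le (hδq a)
  set I : M → ℝ := fun m => ∑ m', (if IsRec g m' then (Pm g q ^ k₀) m m' else 0) with hI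
  have hIrec : ∀ m, IsRec g m → I m = 1 := fun m hm =>
    Ppow_closed_rowsum hq1 (isRec_closed g) k₀ hm
  have hIlow : ∀ m, δ ^ k₀ ≤ I m := by
    intro m
    obtain ⟨w, hw1, hw2⟩ := hk₀ m
    have h1 : δ ^ k₀ ≤ (Pm g q ^ k₀) m (m * prodg g w) := by
      calc δ ^ k₀ = δ ^ w.length := by rw [hw1]
        _ ≤ (w.map q).prod := pow_le_map_prod hδ0.le hδq w
        _ ≤ (Pm g q ^ w.length) m (m * prodg g w) := Ppow_word hq0 w m
        _ = (Pm g q ^ k₀) m (m * prodg g w) := by rw [hw1]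
    refine le_trans h1 ?_
    have : (Pm g q ^ k₀) m (m * prodg g w)
        = (fun m' => if IsRec g m' then (Pm g q ^ k₀) m m' else 0) (m * prodg g w) := by
      simp only [if_pos hw2]
    rw [this]
    exact Finset.single_le_sum
      (f := fun m' => if IsRec g m' then (Pm g q ^ k₀) m m' else 0)
      (fun m' _ => by split_ifs; exacts [Ppow_nonneg hq0 k₀ m m', le_refl 0])
      (Finset.mem_univ _)
  have hkey : (∑ m, if IsRec g m then nu g q j m else 0) + δ ^ k₀ * transMass g q j
      ≤ ∑ m, if IsRec g m then nu g q (j + k₀) m else 0 := by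
    rw [sum_if_nu_add]
    have : ∀ m, (if IsRec g m then nu g q j m else 0)
        + (if IsRec g m then 0 else δ ^ k₀ * nu g q j m) ≤ nu g q j m * I m := by
      intro m
      by_cases h : IsRec g m
      · rw [if_pos h, if_pos h, hIrec m h, mul_one, add_zero]
      · rw [if_neg h, if_neg h, zero_add, mul_comm (δ ^ k₀)]
        exact mul_le_mul_of_nonneg_left (hIlow m) (nu_nonneg hq0 j m)
    calc (∑ m, if IsRec g m then nu g q j m else 0) + δ ^ k₀ * transMass g q j
        = ∑ m, ((if IsRec g m then nu g q j m else 0)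
            + (if IsRec g m then 0 else δ ^ k₀ * nu g q j m)) := by
          rw [Finset.sum_add_distrib, transMass, Finset.mul_sum]
          congr 1
          exact Finset.sum_congr rfl fun m _ => by rw [mul_ite, mul_zero]
      _ ≤ ∑ m, nu g q j m * I m := Finset.sum_le_sum fun m _ => this m
  have h1 := recMass_add_transMass (g := g) (q := q) hq1 j
  have h2 := recMass_add_transMass (g := g) (q := q) hq1 (j + k₀)
  nlinarith [hkey]

lemma trans_bound {g : A → M} {q : A → ℝ} {δ : ℝ} (hδ0 : 0 < δ) (hδ1 : δ ≤ 1)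
    (hδq : ∀ a, δ ≤ q a) (hq1 : ∑ a, q a = 1) {k₀ : ℕ}
    (hk₀ : ∀ m : M, ∃ w : List A, w.length = k₀ ∧ IsRec g (m * prodg g w))
    (u : ℕ) {j : ℕ} (hj : u * k₀ ≤ j) :
    transMass g q j ≤ (1 - δ ^ k₀) ^ u := by
  have hq0 : ∀ a, 0 ≤ q a := fun a => le_trans hδ0.le (hδq a)
  have hbase : ∀ u : ℕ, transMass g q (u * k₀) ≤ (1 - δ ^ k₀) ^ u := by
    intro u
    induction u with
    | zero => simpa using transMass_le_one hq0 hq1 0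
    | succ u ih =>
      have h1 : (u + 1) * k₀ = u * k₀ + k₀ := by ring
      rw [h1, pow_succ]
      calc transMass g q (u * k₀ + k₀) ≤ (1 - δ ^ k₀) * transMass g q (u * k₀) :=
            trans_decay hδ0 hδq hq1 hk₀ (u * k₀)
        _ ≤ (1 - δ ^ k₀) ^ u * (1 - δ ^ k₀) := by
            rw [mul_comm]
            have hnn : 0 ≤ 1 - δ ^ k₀ := by
              have := pow_le_one₀ hδ0.le hδ1 (n := k₀); linarith
            exact mul_le_mul_of_nonneg_right ih hnn
  exact le_trans (transMass_mono' hq0 hq1 hj) (hbase u)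

end SDPaux

namespace SDPaux

variable {A : Type} [Fintype A] [Nonempty A] {M : Type} [Monoid M] [Fintype M]

noncomputable def pusht (g : A → M) (x : M → ℝ) : M → ℝ :=
  fun m' => ∑ m, if IsRec g m ∧ theta g m = m' then x m else 0

lemma fiber_closed (g : A → M) (m' : M) :
    ∀ m, (IsRec g m ∧ theta g m = m') → ∀ a, (IsRec g (m * g a) ∧ theta g (m * g a) = m') := by
  rintro m ⟨h1, h2⟩ a
  exact ⟨isRec_step h1 a, by rw [theta_step h1 a, h2]⟩

lemma pusht_nu_nonneg {g : A → M} {q : A → ℝ} (hq0 : ∀ a, 0 ≤ q a) (hq1 : ∑ a, q a = 1)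
    {t t' : ℕ} (htt' : t ≤ t') (m' : M) :
    0 ≤ pusht g (fun m => nu g q t' m - nu g q t m) m' := by
  have hsplit : pusht g (fun m => nu g q t' m - nu g q t m) m'
      = (∑ m, if IsRec g m ∧ theta g m = m' then nu g q t' m else 0)
        - (∑ m, if IsRec g m ∧ theta g m = m' then nu g q t m else 0) := by
    rw [← Finset.sum_sub_distrib]
    exact Finset.sum_congr rfl fun m _ => by split_ifs <;> simp
  rw [hsplit, sub_nonneg]
  have h := sum_if_nu_mono hq0 hq1 (fiber_closed g m') t (t' - t)
  rw [Nat.add_sub_cancel' htt'] at h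
  convert h using 2 <;> congr

lemma sum_pusht (g : A → M) (x : M → ℝ) :
    ∑ m', pusht g x m' = ∑ m, if IsRec g m then x m else 0 := by
  unfold pusht
  rw [Finset.sum_comm]
  refine Finset.sum_congr rfl fun m _ => ?_
  by_cases h : IsRec g m
  · simp only [h, true_and, if_pos]
    rw [Finset.sum_ite_eq]
    simp
  · simp [h]

lemma pusht_nu_total {g : A → M} {q : A → ℝ} (hq0 : ∀ a, 0 ≤ q a) (hq1 : ∑ a, q a = 1)
    {t t' : ℕ} (htt' : t ≤ t') :
    ∑ m', pusht g (fun m => nu g q t' m - nu g q t m) m' ≤ transMass g q t := by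
  rw [sum_pusht]
  have hsplit : ∑ m, (if IsRec g m then (nu g q t' m - nu g q t m) else 0)
      = (∑ m, if IsRec g m then nu g q t' m else 0)
        - (∑ m, if IsRec g m then nu g q t m else 0) := by
    rw [← Finset.sum_sub_distrib]
    exact Finset.sum_congr rfl fun m _ => by split_ifs <;> simp
  rw [hsplit]
  have h1 := recMass_add_transMass (g := g) (q := q) hq1 t
  have h2 := recMass_add_transMass (g := g) (q := q) hq1 t'
  have h3 := transMass_nonneg (g := g) (q := q) hq0 t'
  linarith

lemma pusht_nu_l1 {g : A → M} {q : A → ℝ} (hq0 : ∀ a, 0 ≤ q a) (hq1 : ∑ a, q a = 1)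
    {t t' : ℕ} (htt' : t ≤ t') :
    ∑ m', |pusht g (fun m => nu g q t' m - nu g q t m) m'| ≤ transMass g q t := by
  have : ∀ m', |pusht g (fun m => nu g q t' m - nu g q t m) m'|
      = pusht g (fun m => nu g q t' m - nu g q t m) m' :=
    fun m' => abs_of_nonneg (pusht_nu_nonneg hq0 hq1 htt' m')
  rw [Finset.sum_congr rfl fun m' _ => this m']
  exact pusht_nu_total hq0 hq1 htt'

lemma l1_app_le {g : A → M} {q : A → ℝ} (hq0 : ∀ a, 0 ≤ q a) (hq1 : ∑ a, q a = 1)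
    (x : M → ℝ) (k : ℕ) :
    ∑ m', |∑ m, x m * (Pm g q ^ k) m m'| ≤ ∑ m, |x m| := by
  calc ∑ m', |∑ m, x m * (Pm g q ^ k) m m'|
      ≤ ∑ m', ∑ m, |x m| * (Pm g q ^ k) m m' := by
        refine Finset.sum_le_sum fun m' _ => ?_
        refine le_trans (Finset.abs_sum_le_sum_abs _ _) ?_
        refine Finset.sum_le_sum fun m _ => ?_
        rw [abs_mul, abs_of_nonneg (Ppow_nonneg hq0 k m m')]
    _ = ∑ m, |x m| * ∑ m', (Pm g q ^ k) m m' := by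
        rw [Finset.sum_comm]
        exact Finset.sum_congr rfl fun m _ => (Finset.mul_sum _ _ _).symm
    _ = ∑ m, |x m| := by
        refine Finset.sum_congr rfl fun m _ => ?_
        rw [Ppow_rowsum hq1, mul_one]

/-- Dobrushin-type contraction for signed measures supported on recurrent states. -/
lemma dobrushin {g : A → M} {q : A → ℝ} {δ : ℝ} (hδ0 : 0 < δ) (hδ1 : δ ≤ 1)
    (hδq : ∀ a, δ ≤ q a) (hq1 : ∑ a, q a = 1) {k₁ : ℕ}
    (hk₁ : ∀ m : M, IsRec g m → ∃ w : List A, w.length = k₁ ∧ m * prodg g w = theta g m)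
    (γ : M → ℝ) (hγ : ∀ m, ¬ IsRec g m → γ m = 0) :
    ∑ m', |(∑ m, γ m * (Pm g q ^ k₁) m m') - δ ^ k₁ * pusht g γ m'|
      ≤ (1 - δ ^ k₁) * ∑ m, |γ m| := by
  have hq0 : ∀ a, 0 ≤ q a := fun a => le_trans hδ0.le (hδq a)
  have hδk1 : δ ^ k₁ ≤ 1 := pow_le_one₀ hδ0.le hδ1
  set E : M → M → ℝ :=
    fun m m' => (Pm g q ^ k₁) m m' - (if theta g m = m' then δ ^ k₁ else 0) with hE
  have hE_nonneg : ∀ m m', IsRec g m → 0 ≤ E m m' := by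
    intro m m' hm
    rw [hE]
    dsimp only
    by_cases ht : theta g m = m'
    · rw [if_pos ht, sub_nonneg, ← ht]
      obtain ⟨w, hw1, hw2⟩ := hk₁ m hm
      calc δ ^ k₁ = δ ^ w.length := by rw [hw1]
        _ ≤ (w.map q).prod := pow_le_map_prod hδ0.le hδq w
        _ ≤ (Pm g q ^ w.length) m (m * prodg g w) := Ppow_word hq0 w m
        _ = (Pm g q ^ k₁) m (theta g m) := by rw [hw1, hw2]
    · rw [if_neg ht, sub_zero]
      exact Ppow_nonneg hq0 k₁ m m'
  have hE_rowsum : ∀ m, ∑ m', E m m' = 1 - δ ^ k₁ := by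
    intro m
    rw [hE]
    dsimp only
    rw [Finset.sum_sub_distrib, Ppow_rowsum hq1, Finset.sum_ite_eq]
    simp
  have hmain : ∀ m', (∑ m, γ m * (Pm g q ^ k₁) m m') - δ ^ k₁ * pusht g γ m'
      = ∑ m, (if IsRec g m then γ m * E m m' else 0) := by
    intro m'
    rw [pusht, Finset.mul_sum, ← Finset.sum_sub_distrib]
    refine Finset.sum_congr rfl fun m _ => ?_
    by_cases hm : IsRec g m
    · rw [if_pos hm, hE]
      dsimp only
      by_cases ht : theta g m = m' <;> simp [hm, ht] <;> ring
    · simp [hm, hγ m hm]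
  calc ∑ m', |(∑ m, γ m * (Pm g q ^ k₁) m m') - δ ^ k₁ * pusht g γ m'|
      = ∑ m', |∑ m, (if IsRec g m then γ m * E m m' else 0)| := by
        exact Finset.sum_congr rfl fun m' _ => by rw [hmain]
    _ ≤ ∑ m', ∑ m, (if IsRec g m then |γ m| * E m m' else 0) := by
        refine Finset.sum_le_sum fun m' _ => ?_
        refine le_trans (Finset.abs_sum_le_sum_abs _ _) ?_
        refine Finset.sum_le_sum fun m _ => ?_
        by_cases hm : IsRec g m
        · rw [if_pos hm, if_pos hm, abs_mul, abs_of_nonneg (hE_nonneg m m' hm)]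
        · simp [hm]
    _ = ∑ m, (if IsRec g m then |γ m| * (1 - δ ^ k₁) else 0) := by
        rw [Finset.sum_comm]
        refine Finset.sum_congr rfl fun m _ => ?_
        by_cases hm : IsRec g m
        · simp only [if_pos hm]
          rw [← Finset.mul_sum, hE_rowsum]
        · simp [hm]
    _ ≤ ∑ m, |γ m| * (1 - δ ^ k₁) := by
        refine Finset.sum_le_sum fun m _ => ?_
        split_ifs
        · exact le_refl _
        · exact mul_nonneg (abs_nonneg _) (by linarith)
    _ = (1 - δ ^ k₁) * ∑ m, |γ m| := by rw [← Finset.sum_mul, mul_comm]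

end SDPaux

namespace SDPaux

variable {A : Type} [Fintype A] [Nonempty A] {M : Type} [Monoid M] [Fintype M]

lemma key_recursion {g : A → M} {q : A → ℝ} {δ : ℝ} (hδ0 : 0 < δ) (hδ1 : δ ≤ 1)
    (hδq : ∀ a, δ ≤ q a) (hq1 : ∑ a, q a = 1) {k₁ : ℕ}
    (hk₁ : ∀ m : M, IsRec g m → ∃ w : List A, w.length = k₁ ∧ m * prodg g w = theta g m)
    {t t' : ℕ} (htt' : t ≤ t') (s : ℕ) :
    ∑ m, |nu g q (t' + s * k₁) m - nu g q (t + s * k₁) m|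
      ≤ (1 - δ ^ k₁) ^ s * 2 + 3 * (s : ℝ) * transMass g q t := by
  have hq0 : ∀ a, 0 ≤ q a := fun a => le_trans hδ0.le (hδq a)
  have hδk1 : δ ^ k₁ ≤ 1 := pow_le_one₀ hδ0.le hδ1
  have hδk0 : 0 ≤ δ ^ k₁ := pow_nonneg hδ0.le k₁
  have htr0 : 0 ≤ transMass g q t := transMass_nonneg hq0 t
  induction s with
  | zero =>
    have hb : ∀ m, |nu g q t' m - nu g q t m| ≤ nu g q t' m + nu g q t m := by
      intro m
      rw [sub_eq_add_neg]
      refine le_trans (abs_add_le _ _) ?_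
      rw [abs_neg, abs_of_nonneg (nu_nonneg hq0 t' m), abs_of_nonneg (nu_nonneg hq0 t m)]
    have h2 : ∑ m, |nu g q t' m - nu g q t m| ≤ 2 := by
      calc ∑ m, |nu g q t' m - nu g q t m| ≤ ∑ m, (nu g q t' m + nu g q t m) :=
            Finset.sum_le_sum fun m _ => hb m
        _ = 2 := by rw [Finset.sum_add_distrib, nu_total hq1, nu_total hq1]; norm_num
    simpa using h2
  | succ s ih =>
    set T : ℕ := t + s * k₁ with hT
    set T' : ℕ := t' + s * k₁ with hT'
    have hTT' : T ≤ T' := by omega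
    have e1 : t + (s + 1) * k₁ = T + k₁ := by rw [hT]; ring
    have e2 : t' + (s + 1) * k₁ = T' + k₁ := by rw [hT']; ring
    set γ : M → ℝ := fun m => nu g q T' m - nu g q T m with hγ
    set ρ : M → ℝ := fun m => if IsRec g m then γ m else 0 with hρ
    set τ : M → ℝ := fun m => if IsRec g m then 0 else γ m with hτ
    have hρ0 : ∀ m, ¬ IsRec g m → ρ m = 0 := fun m hm => by rw [hρ]; simp [hm]
    have hstep : ∀ m'', nu g q (T' + k₁) m'' - nu g q (T + k₁) m''
        = ((∑ m, ρ m * (Pm g q ^ k₁) m m'') - δ ^ k₁ * pusht g ρ m'')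
          + δ ^ k₁ * pusht g ρ m'' + ∑ m, τ m * (Pm g q ^ k₁) m m'' := by
      intro m''
      have h1 : nu g q (T' + k₁) m'' - nu g q (T + k₁) m''
          = ∑ m, γ m * (Pm g q ^ k₁) m m'' := by
        rw [nu_add, nu_add, ← Finset.sum_sub_distrib]
        exact Finset.sum_congr rfl fun m _ => (sub_mul _ _ _).symm
      have h2 : ∑ m, γ m * (Pm g q ^ k₁) m m''
          = (∑ m, ρ m * (Pm g q ^ k₁) m m'') + ∑ m, τ m * (Pm g q ^ k₁) m m'' := by
        rw [← Finset.sum_add_distrib]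
        refine Finset.sum_congr rfl fun m _ => ?_
        by_cases h : IsRec g m <;> simp [hρ, hτ, h]
      rw [h1, h2]; ring
    have hpρ : pusht g ρ = pusht g γ := by
      funext m'
      refine Finset.sum_congr rfl fun m _ => ?_
      by_cases h : IsRec g m ∧ theta g m = m'
      · rw [if_pos h, if_pos h, hρ]; simp [h.1]
      · rw [if_neg h, if_neg h]
    have hA : ∑ m', |(∑ m, ρ m * (Pm g q ^ k₁) m m') - δ ^ k₁ * pusht g ρ m'|
        ≤ (1 - δ ^ k₁) * ∑ m, |γ m| := by
      refine le_trans (dobrushin hδ0 hδ1 hδq hq1 hk₁ ρ hρ0) ?_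
      have h1 : ∑ m, |ρ m| ≤ ∑ m, |γ m| := by
        refine Finset.sum_le_sum fun m _ => ?_
        rw [hρ]; dsimp only
        split_ifs
        · exact le_refl _
        · simp
      have hc0 : (0:ℝ) ≤ 1 - δ ^ k₁ := by linarith
      exact mul_le_mul_of_nonneg_left h1 hc0
    have hB : ∑ m', |pusht g ρ m'| ≤ transMass g q t := by
      rw [hpρ]
      refine le_trans (pusht_nu_l1 hq0 hq1 hTT') ?_
      exact transMass_mono hq0 hq1 t (s * k₁)
    have hC : ∑ m', |∑ m, τ m * (Pm g q ^ k₁) m m'| ≤ 2 * transMass g q t := by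
      refine le_trans (l1_app_le hq0 hq1 τ k₁) ?_
      have h1 : ∀ m, |τ m| ≤ (if IsRec g m then 0 else nu g q T' m)
          + (if IsRec g m then 0 else nu g q T m) := by
        intro m
        rw [hτ]; dsimp only
        split_ifs with h
        · simp
        · rw [hγ]; dsimp only
          rw [sub_eq_add_neg]
          refine le_trans (abs_add_le _ _) ?_
          rw [abs_neg, abs_of_nonneg (nu_nonneg hq0 T' m), abs_of_nonneg (nu_nonneg hq0 T m)]
      calc ∑ m, |τ m| ≤ ∑ m, ((if IsRec g m then 0 else nu g q T' m)
            + (if IsRec g m then 0 else nu g q T m)) := Finset.sum_le_sum fun m _ => h1 m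
        _ = transMass g q T' + transMass g q T := by
            rw [Finset.sum_add_distrib]; rfl
        _ ≤ 2 * transMass g q t := by
            have h2 : transMass g q T' ≤ transMass g q t :=
              transMass_mono' hq0 hq1 (by omega)
            have h3 : transMass g q T ≤ transMass g q t :=
              transMass_mono' hq0 hq1 (by omega)
            linarith
    have hsum : ∑ m', |nu g q (t' + (s+1) * k₁) m' - nu g q (t + (s+1) * k₁) m'|
        ≤ (1 - δ ^ k₁) * (∑ m, |γ m|) + δ ^ k₁ * transMass g q t + 2 * transMass g q t := by
      rw [e1, e2]
      have htri : ∀ m'', |nu g q (T' + k₁) m'' - nu g q (T + k₁) m''|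
          ≤ |(∑ m, ρ m * (Pm g q ^ k₁) m m'') - δ ^ k₁ * pusht g ρ m''|
            + δ ^ k₁ * |pusht g ρ m''| + |∑ m, τ m * (Pm g q ^ k₁) m m''| := by
        intro m''
        rw [hstep m'']
        refine le_trans (abs_add_le _ _) ?_
        have := abs_add_le ((∑ m, ρ m * (Pm g q ^ k₁) m m'') - δ ^ k₁ * pusht g ρ m'')
          (δ ^ k₁ * pusht g ρ m'')
        have habs : |δ ^ k₁ * pusht g ρ m''| = δ ^ k₁ * |pusht g ρ m''| := by
          rw [abs_mul, abs_of_nonneg hδk0]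
        linarith [abs_add_le ((∑ m, ρ m * (Pm g q ^ k₁) m m'') - δ ^ k₁ * pusht g ρ m'')
          (δ ^ k₁ * pusht g ρ m'')]
      calc ∑ m'', |nu g q (T' + k₁) m'' - nu g q (T + k₁) m''|
          ≤ ∑ m'', (|(∑ m, ρ m * (Pm g q ^ k₁) m m'') - δ ^ k₁ * pusht g ρ m''|
            + δ ^ k₁ * |pusht g ρ m''| + |∑ m, τ m * (Pm g q ^ k₁) m m''|) :=
            Finset.sum_le_sum fun m'' _ => htri m''
        _ = (∑ m', |(∑ m, ρ m * (Pm g q ^ k₁) m m') - δ ^ k₁ * pusht g ρ m'|)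
            + δ ^ k₁ * (∑ m', |pusht g ρ m'|)
            + ∑ m', |∑ m, τ m * (Pm g q ^ k₁) m m'| := by
            rw [Finset.sum_add_distrib, Finset.sum_add_distrib, Finset.mul_sum]
        _ ≤ (1 - δ ^ k₁) * (∑ m, |γ m|) + δ ^ k₁ * transMass g q t
            + 2 * transMass g q t := by
            have hBmul : δ ^ k₁ * (∑ m', |pusht g ρ m'|) ≤ δ ^ k₁ * transMass g q t :=
              mul_le_mul_of_nonneg_left hB hδk0
            linarith
    have hIH : ∑ m, |γ m| ≤ (1 - δ ^ k₁) ^ s * 2 + 3 * (s : ℝ) * transMass g q t := ih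
    rw [pow_succ]
    push_cast
    have hc0 : (0:ℝ) ≤ 1 - δ ^ k₁ := by linarith
    have hs0 : (0:ℝ) ≤ (s : ℝ) := Nat.cast_nonneg s
    nlinarith [mul_le_mul_of_nonneg_left hIH hc0, mul_nonneg (mul_nonneg hs0 htr0) hδk0,
      mul_nonneg hδk0 htr0]
  done

end SDPaux

namespace SDPaux

variable {A : Type} [Fintype A] [Nonempty A] {M : Type} [Monoid M] [Fintype M]

lemma uniform_cauchy (g : A → M) {n₀ : ℕ} (hn₀ : 1 ≤ n₀)
    (hap : ∀ m : M, m ^ n₀ = m ^ (n₀ + 1)) {δ : ℝ} (hδ0 : 0 < δ) (hδ1 : δ ≤ 1)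
    {ε : ℝ} (hε : 0 < ε) :
    ∃ J : ℕ, ∀ q : A → ℝ, (∀ a, δ ≤ q a) → (∑ a, q a = 1) → ∀ j j' : ℕ, J ≤ j → j ≤ j' →
      ∑ m, |nu g q j' m - nu g q j m| ≤ ε := by
  obtain ⟨k₀, hk₀1, hk₀⟩ := exists_k0 g
  obtain ⟨k₁, hk₁1, hk₁⟩ := exists_k1 g hn₀ hap
  have hδk1pos : 0 < δ ^ k₁ := pow_pos hδ0 k₁
  have hδk0pos : 0 < δ ^ k₀ := pow_pos hδ0 k₀
  have hδk1le : δ ^ k₁ ≤ 1 := pow_le_one₀ hδ0.le hδ1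
  have hδk0le : δ ^ k₀ ≤ 1 := pow_le_one₀ hδ0.le hδ1
  have hc1 : 1 - δ ^ k₁ < 1 := by linarith
  have hd1 : 1 - δ ^ k₀ < 1 := by linarith
  have hc0 : (0:ℝ) ≤ 1 - δ ^ k₁ := by linarith
  have hd0 : (0:ℝ) ≤ 1 - δ ^ k₀ := by linarith
  obtain ⟨s, hs⟩ := exists_pow_lt_of_lt_one (x := ε/4) (by linarith) hc1
  have hs0 : (0:ℝ) ≤ 3 * (s:ℝ) := by positivity
  have hden : (0:ℝ) < 2 * (3 * (s:ℝ) + 1) := by positivity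
  obtain ⟨u, hu⟩ := exists_pow_lt_of_lt_one (x := ε / (2 * (3 * (s:ℝ) + 1)))
    (by positivity) hd1
  refine ⟨s * k₁ + u * k₀, fun q hδq hq1 j j' hJ hjj' => ?_⟩
  have hq0 : ∀ a, 0 ≤ q a := fun a => le_trans hδ0.le (hδq a)
  set t := j - s * k₁ with hts
  set t' := j' - s * k₁ with hts'
  have ht : t + s * k₁ = j := by omega
  have ht' : t' + s * k₁ = j' := by omega
  have htt' : t ≤ t' := by omega
  have hkey := key_recursion hδ0 hδ1 hδq hq1 hk₁ htt' s
  rw [ht, ht'] at hkey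
  have htb : transMass g q t ≤ (1 - δ ^ k₀) ^ u :=
    trans_bound hδ0 hδ1 hδq hq1 hk₀ u (by omega)
  have htr0 : 0 ≤ transMass g q t := transMass_nonneg hq0 t
  have h1 : 3 * (s:ℝ) * transMass g q t ≤ 3 * (s:ℝ) * (ε / (2 * (3 * (s:ℝ) + 1))) :=
    mul_le_mul_of_nonneg_left (le_trans htb hu.le) hs0
  have h2 : 3 * (s:ℝ) * (ε / (2 * (3 * (s:ℝ) + 1))) ≤ ε / 2 := by
    rw [mul_div_assoc', div_le_div_iff₀ hden (by norm_num : (0:ℝ) < 2)]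
    nlinarith [hε.le]
  have h3 : (1 - δ ^ k₁) ^ s * 2 ≤ ε / 2 := by nlinarith [hs]
  linarith [hkey]

noncomputable def Fd (g : A → M) (q : A → ℝ) (N : Set M) (j : ℕ) : ℝ :=
  ∑ m, if m ∈ N then nu g q j m else 0

lemma Fd_diff_le (g : A → M) (q : A → ℝ) (N : Set M) (j j' : ℕ) :
    |Fd g q N j' - Fd g q N j| ≤ ∑ m, |nu g q j' m - nu g q j m| := by
  have h1 : Fd g q N j' - Fd g q N j
      = ∑ m, if m ∈ N then (nu g q j' m - nu g q j m) else 0 := by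
    rw [Fd, Fd, ← Finset.sum_sub_distrib]
    exact Finset.sum_congr rfl fun m _ => by split_ifs <;> simp
  rw [h1]
  refine le_trans (Finset.abs_sum_le_sum_abs _ _) ?_
  refine Finset.sum_le_sum fun m _ => ?_
  split_ifs
  · exact le_refl _
  · simp [abs_nonneg]

lemma Pm_entry_tendsto {g : A → M} {p : ℕ → A → ℝ} {pbar : A → ℝ}
    (hconv : ∀ a, Filter.Tendsto (fun n => p n a) Filter.atTop (nhds (pbar a))) (m m' : M) :
    Filter.Tendsto (fun n => Pm g (p n) m m') Filter.atTop (nhds (Pm g pbar m m')) := by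
  simp only [Pm_apply]
  refine tendsto_finset_sum _ fun a _ => ?_
  by_cases h : m * g a = m'
  · simp only [if_pos h]; exact hconv a
  · simp only [if_neg h]; exact tendsto_const_nhds

lemma Ppow_entry_tendsto {g : A → M} {p : ℕ → A → ℝ} {pbar : A → ℝ}
    (hconv : ∀ a, Filter.Tendsto (fun n => p n a) Filter.atTop (nhds (pbar a))) (k : ℕ)
    (m m' : M) :
    Filter.Tendsto (fun n => (Pm g (p n) ^ k) m m') Filter.atTop
      (nhds ((Pm g pbar ^ k) m m')) := by
  induction k generalizing m' with
  | zero => simp only [pow_zero]; exact tendsto_const_nhds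
  | succ k ih =>
    simp only [pow_succ, Matrix.mul_apply]
    exact tendsto_finset_sum _ fun x _ => (ih x).mul (Pm_entry_tendsto hconv x m')

lemma Fd_tendsto {g : A → M} {p : ℕ → A → ℝ} {pbar : A → ℝ}
    (hconv : ∀ a, Filter.Tendsto (fun n => p n a) Filter.atTop (nhds (pbar a)))
    (N : Set M) (j : ℕ) :
    Filter.Tendsto (fun n => Fd g (p n) N j) Filter.atTop (nhds (Fd g pbar N j)) := by
  rw [Fd]
  refine tendsto_finset_sum _ fun m _ => ?_
  by_cases h : m ∈ N
  · simp only [if_pos h]; exact Ppow_entry_tendsto hconv j 1 m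
  · simp only [if_neg h]; exact tendsto_const_nhds

end SDPaux

namespace SDPaux

variable {A : Type} [Fintype A] [Nonempty A] {M : Type} [Monoid M] [Fintype M]

lemma Ppow_row (g : A → M) (q : A → ℝ) (i : ℕ) (m₀ m' : M) :
    (Pm g q ^ i) m₀ m'
      = ∑ w : Fin i → A, if m₀ * prodg g (List.ofFn w) = m' then ∏ j, q (w j) else 0 := by
  induction i generalizing m₀ with
  | zero =>
    rw [pow_zero, Fintype.sum_unique]
    simp [Matrix.one_apply, List.ofFn_zero]
  | succ i ih =>
    rw [pow_succ', Matrix.mul_apply]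
    have lhs_eq : ∑ x, Pm g q m₀ x * (Pm g q ^ i) x m'
        = ∑ a, q a * (Pm g q ^ i) (m₀ * g a) m' := by
      calc ∑ x, Pm g q m₀ x * (Pm g q ^ i) x m'
          = ∑ x, ∑ a, (if m₀ * g a = x then q a * (Pm g q ^ i) x m' else 0) := by
            refine Finset.sum_congr rfl fun x _ => ?_
            rw [Pm_apply, Finset.sum_mul]
            exact Finset.sum_congr rfl fun a _ => by rw [ite_mul, zero_mul]
        _ = ∑ a, ∑ x, (if m₀ * g a = x then q a * (Pm g q ^ i) x m' else 0) :=
            Finset.sum_comm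
        _ = ∑ a, q a * (Pm g q ^ i) (m₀ * g a) m' := by
            refine Finset.sum_congr rfl fun a _ => ?_
            rw [Finset.sum_ite_eq]
            simp
    rw [lhs_eq]
    have rhs_eq : ∑ w : Fin (i+1) → A,
        (if m₀ * prodg g (List.ofFn w) = m' then ∏ j, q (w j) else 0)
        = ∑ p : A × (Fin i → A),
          (if m₀ * prodg g (List.ofFn (Fin.cons p.1 p.2 : Fin (i+1) → A)) = m'
            then ∏ j : Fin (i+1), q ((Fin.cons p.1 p.2 : Fin (i+1) → A) j) else 0) := by
      exact (Fintype.sum_equiv (Fin.consEquiv (fun _ => A))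
        (fun p => (if m₀ * prodg g (List.ofFn (Fin.cons p.1 p.2 : Fin (i+1) → A)) = m'
            then ∏ j : Fin (i+1), q ((Fin.cons p.1 p.2 : Fin (i+1) → A) j) else 0))
        (fun w => (if m₀ * prodg g (List.ofFn w) = m' then ∏ j, q (w j) else 0))
        (fun p => rfl)).symm
    rw [rhs_eq, Fintype.sum_prod_type]
    refine Finset.sum_congr rfl fun a _ => ?_
    rw [ih (m₀ * g a), Finset.mul_sum]
    refine Finset.sum_congr rfl fun w _ => ?_
    have hofn : List.ofFn (Fin.cons a w : Fin (i+1) → A) = a :: List.ofFn w := by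
      rw [List.ofFn_succ]
      simp [Fin.cons_zero, Fin.cons_succ]
    have hprod : (∏ j : Fin (i+1), q ((Fin.cons a w : Fin (i+1) → A) j))
        = q a * ∏ j, q (w j) := by
      rw [Fin.prod_univ_succ]
      simp [Fin.cons_zero, Fin.cons_succ]
    rw [hofn, hprod, prodg_cons, ← mul_assoc]
    rw [mul_ite, mul_zero]

lemma phi_prodg (φ : FreeMonoid A →* M) (w : List A) :
    φ (FreeMonoid.ofList w) = prodg (fun a => φ (FreeMonoid.of a)) w := by
  induction w with
  | nil => exact map_one φ
  | cons a w ih =>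
    have : FreeMonoid.ofList (a :: w) = FreeMonoid.of a * FreeMonoid.ofList w := rfl
    rw [this, map_mul, ih, prodg_cons]

end SDPaux

namespace SDPaux

lemma bern_eq {A : Type} [Fintype A] [Nonempty A] {M : Type} [Monoid M] [Fintype M]
    (φ : FreeMonoid A →* M) (N : Set M) (L : Set (List A))
    (hLdef : L = {w : List A | φ (FreeMonoid.ofList w) ∈ N}) (q : A → ℝ) (i : ℕ) :
    bernoulliLangMeasure q L i = Fd (fun a => φ (FreeMonoid.of a)) q N i := by
  set g : A → (M) := fun a => φ (FreeMonoid.of a) with hg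
  have hmem : ∀ w : Fin i → A, (List.ofFn w ∈ L) ↔ prodg g (List.ofFn w) ∈ N := by
    intro w
    rw [hLdef]
    simp only [Set.mem_setOf_eq]
    rw [phi_prodg]
  have hswap : ∑ m, (if m ∈ N then nu g q i m else 0)
      = ∑ w : Fin i → A, (if prodg g (List.ofFn w) ∈ N then ∏ j, q (w j) else 0) := by
    calc ∑ m, (if m ∈ N then nu g q i m else 0)
        = ∑ m, ∑ w : Fin i → A,
            (if prodg g (List.ofFn w) = m then (if m ∈ N then ∏ j, q (w j) else 0)
              else 0) := by
          refine Finset.sum_congr rfl fun m _ => ?_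
          by_cases h : m ∈ N
          · rw [if_pos h, nu, Ppow_row]
            refine Finset.sum_congr rfl fun w _ => ?_
            rw [one_mul, if_pos h]
          · simp [h]
      _ = ∑ w : Fin i → A, ∑ m,
            (if prodg g (List.ofFn w) = m then (if m ∈ N then ∏ j, q (w j) else 0)
              else 0) := Finset.sum_comm
      _ = ∑ w : Fin i → A, (if prodg g (List.ofFn w) ∈ N then ∏ j, q (w j) else 0) := by
          refine Finset.sum_congr rfl fun w _ => ?_
          rw [Finset.sum_ite_eq]
          simp
  rw [bernoulliLangMeasure, Fd, hswap]
  refine Finset.sum_congr rfl fun w _ => ?_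
  by_cases h : List.ofFn w ∈ L
  · rw [if_pos h, if_pos ((hmem w).1 h)]
  · rw [if_neg h, if_neg (fun hc => h ((hmem w).2 hc))]

end SDPaux

/-- Theorem: if `(p n)` is a sequence of probability vectors on a finite nonempty
alphabet `A` converging pointwise to a positive probability vector `pbar`, then for
every aperiodic language `L ⊆ A*` there is a real `d` which is both the strong
density of `L` with respect to the Bernoulli measure of `pbar` and the strong
sequential density of `L` with respect to the sequence of Bernoulli measures. -/
theorem strongSequentialDensity_of_bernoulli_tendsto_positive_of_aperiodic
    {A : Type} [Fintype A] [Nonempty A]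
    (p : ℕ → A → ℝ) (pbar : A → ℝ)
    (hp_nonneg : ∀ n a, 0 ≤ p n a) (hp_sum : ∀ n, ∑ a, p n a = 1)
    (hpbar_pos : ∀ a, 0 < pbar a) (hpbar_sum : ∑ a, pbar a = 1)
    (hconv : ∀ a, Tendsto (fun n => p n a) atTop (nhds (pbar a)))
    (L : Set (List A)) (hL : IsAperiodicLang L) :
    ∃ d : ℝ,
      Tendsto (fun n : ℕ => bernoulliLangMeasure pbar L n) atTop (nhds d) ∧
      Tendsto (fun n : ℕ => bernoulliLangMeasure (p n) L n) atTop (nhds d) := by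
  obtain ⟨M, instM, instF, φ, N, ⟨n₀, hn₀, hap⟩, hLdef⟩ := hL
  set g : A → M := fun a => φ (FreeMonoid.of a) with hg
  -- the positive lower bound δ
  set ι := Finset.univ.inf' (Finset.univ_nonempty (α := A)) pbar with hι
  have hιpos : 0 < ι := by
    obtain ⟨a, _, ha⟩ := Finset.exists_mem_eq_inf' (Finset.univ_nonempty (α := A)) pbar
    rw [hι, ha]; exact hpbar_pos a
  have hιle : ∀ a, ι ≤ pbar a := fun a => Finset.inf'_le pbar (Finset.mem_univ a)
  have hpbar_le1 : ∀ a, pbar a ≤ 1 := by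
    intro a
    rw [← hpbar_sum]
    exact Finset.single_le_sum (fun a' _ => (hpbar_pos a').le) (Finset.mem_univ a)
  set δ : ℝ := ι / 2 with hδ
  have hδ0 : 0 < δ := by rw [hδ]; linarith
  have hδ1 : δ ≤ 1 := by
    have := hιle (Classical.arbitrary A)
    have := hpbar_le1 (Classical.arbitrary A)
    rw [hδ]; linarith
  have hδpbar : ∀ a, δ ≤ pbar a := fun a => by
    have := hιle a; rw [hδ]; linarith
  -- eventually the p n are bounded below by δ
  have hev : ∀ᶠ n in atTop, ∀ a, δ ≤ p n a := by
    rw [Filter.eventually_all]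
    intro a
    refine (hconv a).eventually (eventually_ge_nhds ?_)
    have := hιle a; rw [hδ]; linarith
  obtain ⟨N₀, hN₀⟩ := Filter.eventually_atTop.1 hev
  -- Cauchy property of the pbar-density sequence
  have hcauchy : CauchySeq (fun j => SDPaux.Fd g pbar N j) := by
    rw [Metric.cauchySeq_iff]
    intro ε hε
    obtain ⟨J, hJ⟩ := SDPaux.uniform_cauchy g hn₀ hap hδ0 hδ1 (half_pos hε)
    refine ⟨J, fun a ha b hb => ?_⟩
    rcases le_total b a with hab | hab
    · rw [Real.dist_eq]
      calc |SDPaux.Fd g pbar N a - SDPaux.Fd g pbar N b|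
          ≤ ∑ m, |SDPaux.nu g pbar a m - SDPaux.nu g pbar b m| :=
            SDPaux.Fd_diff_le g pbar N b a
        _ ≤ ε / 2 := hJ pbar hδpbar hpbar_sum b a hb hab
        _ < ε := by linarith
    · rw [Real.dist_eq, abs_sub_comm]
      calc |SDPaux.Fd g pbar N b - SDPaux.Fd g pbar N a|
          ≤ ∑ m, |SDPaux.nu g pbar b m - SDPaux.nu g pbar a m| :=
            SDPaux.Fd_diff_le g pbar N a b
        _ ≤ ε / 2 := hJ pbar hδpbar hpbar_sum a b ha hab
        _ < ε := by linarith
  obtain ⟨d, hd⟩ := cauchySeq_tendsto_of_complete hcauchy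
  have hbern : ∀ (q : A → ℝ) (i : ℕ), bernoulliLangMeasure q L i = SDPaux.Fd g q N i :=
    fun q i => SDPaux.bern_eq φ N L hLdef q i
  refine ⟨d, ?_, ?_⟩
  · have : (fun n : ℕ => bernoulliLangMeasure pbar L n) = fun j => SDPaux.Fd g pbar N j := by
      funext n; exact hbern pbar n
    rw [this]; exact hd
  · rw [Metric.tendsto_atTop]
    intro ε hε
    have hε4 : 0 < ε / 4 := by linarith
    obtain ⟨J, hJ⟩ := SDPaux.uniform_cauchy g hn₀ hap hδ0 hδ1 hε4
    obtain ⟨N₂, hN₂⟩ := Metric.tendsto_atTop.1 hd (ε / 4) hε4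
    set J₂ := max J N₂ with hJ₂
    obtain ⟨N₃, hN₃⟩ := Metric.tendsto_atTop.1 (SDPaux.Fd_tendsto hconv N J₂) (ε / 4) hε4
    refine ⟨max (max J₂ N₃) N₀, fun n hn => ?_⟩
    have hnJ₂ : J₂ ≤ n := le_trans (le_trans (le_max_left _ _) (le_max_left _ _)) hn
    have hnN₃ : N₃ ≤ n := le_trans (le_trans (le_max_right _ _) (le_max_left _ _)) hn
    have hnN₀ : N₀ ≤ n := le_trans (le_max_right _ _) hn
    rw [Real.dist_eq, hbern (p n) n]
    have h1 : |SDPaux.Fd g (p n) N n - SDPaux.Fd g (p n) N J₂| ≤ ε / 4 := by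
      refine le_trans (SDPaux.Fd_diff_le g (p n) N J₂ n) ?_
      exact hJ (p n) (hN₀ n hnN₀) (hp_sum n) J₂ n (le_max_left _ _) hnJ₂
    have h2 : |SDPaux.Fd g (p n) N J₂ - SDPaux.Fd g pbar N J₂| < ε / 4 := by
      have := hN₃ n hnN₃
      rwa [Real.dist_eq] at this
    have h3 : |SDPaux.Fd g pbar N J₂ - d| < ε / 4 := by
      have := hN₂ J₂ (le_max_right _ _)
      rwa [Real.dist_eq] at this
    calc |SDPaux.Fd g (p n) N n - d|
        ≤ |SDPaux.Fd g (p n) N n - SDPaux.Fd g (p n) N J₂|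
          + |SDPaux.Fd g (p n) N J₂ - d| := abs_sub_le _ _ _
      _ ≤ |SDPaux.Fd g (p n) N n - SDPaux.Fd g (p n) N J₂|
          + (|SDPaux.Fd g (p n) N J₂ - SDPaux.Fd g pbar N J₂|
            + |SDPaux.Fd g pbar N J₂ - d|) := by
          have := abs_sub_le (SDPaux.Fd g (p n) N J₂) (SDPaux.Fd g pbar N J₂) d
          linarith
      _ < ε := by linarith
end

section
/- Let A be a finite nonempty alphabet and consider the shift S on A^ℤ = (ℤ → A), (Sx)_k = x_{k+1}. Let (μ_n)_{n≥0} be a sequence of ergodic shift-invariant Borel probability measures converging in the strong sense to a Borel probability measure μ̄ (for every ε > 0 there is N with |μ_n(U) − μ̄(U)| ≤ ε for all n ≥ N and all Borel sets U). Then the sequence is eventually constant: there exists N such that μ_n = μ̄ for every n ≥ N. -/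
open MeasureTheory

/-- The shift map on `A^ℤ`. -/
def shiftMap {A : Type*} : (ℤ → A) → (ℤ → A) := fun x k => x (k + 1)

/-- A shift-invariant measure `μ` is ergodic if every Borel set invariant under the
shift has measure `0` or `1`. -/
def IsErgodicShift {A : Type*} [MeasurableSpace A] (μ : Measure (ℤ → A)) : Prop :=
  ∀ U : Set (ℤ → A), MeasurableSet U → shiftMap ⁻¹' U = U → μ U = 0 ∨ μ U = 1

section Aux

variable {A : Type*} [MeasurableSpace A]

/-- The shift by `n` on `A^ℤ`. -/
def shiftN (n : ℤ) : (ℤ → A) → (ℤ → A) := fun x k => x (k + n)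

lemma measurable_shiftN (n : ℤ) : Measurable (shiftN (A := A) n) :=
  measurable_pi_lambda _ fun k => measurable_pi_apply (k + n)

lemma measurable_shiftMap : Measurable (shiftMap (A := A)) :=
  measurable_pi_lambda _ fun k => measurable_pi_apply (k + 1)

/-- The shift as a measurable equivalence. -/
def shiftEquiv : (ℤ → A) ≃ᵐ (ℤ → A) where
  toFun := shiftMap
  invFun := fun x k => x (k - 1)
  left_inv := fun x => funext fun k => by simp [shiftMap]
  right_inv := fun x => funext fun k => by simp [shiftMap]
  measurable_toFun := measurable_shiftMap
  measurable_invFun := measurable_pi_lambda _ fun k => measurable_pi_apply (k - 1)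

lemma shiftMap_embedding : MeasurableEmbedding (shiftMap (A := A)) :=
  (shiftEquiv (A := A)).measurableEmbedding

omit [MeasurableSpace A] in
lemma shiftN_comp_shiftMap (n : ℤ) :
    (shiftN (A := A) n) ∘ shiftMap = shiftN (n + 1) := by
  funext x k
  simp only [Function.comp_apply, shiftN, shiftMap]
  ring_nf

lemma map_shiftN_eq {ν : Measure (ℤ → A)} (hinv : ν.map shiftMap = ν) (n : ℤ) :
    ν.map (shiftN n) = ν := by
  induction n using Int.induction_on with
  | zero =>
      have : shiftN (A := A) 0 = id := by funext x k; simp [shiftN]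
      rw [this, Measure.map_id]
  | succ n ih =>
      have : shiftN (A := A) (n + 1) = (shiftN (n : ℤ)) ∘ shiftMap :=
        (shiftN_comp_shiftMap _).symm
      rw [this, ← Measure.map_map (measurable_shiftN _) measurable_shiftMap, hinv, ih]
  | pred n ih =>
      have h : (shiftN (A := A) (-n - 1)) ∘ shiftMap = shiftN (-n) := by
        rw [shiftN_comp_shiftMap]; ring_nf
      calc ν.map (shiftN (-n - 1)) = (ν.map shiftMap).map (shiftN (-n - 1)) := by rw [hinv]
        _ = ν.map ((shiftN (-n - 1)) ∘ shiftMap) :=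
            (Measure.map_map (measurable_shiftN _) measurable_shiftMap)
        _ = ν := by rw [h, ih]

lemma ergodic_shift_of {ν : Measure (ℤ → A)} [IsProbabilityMeasure ν]
    (hinv : ν.map shiftMap = ν) (herg : IsErgodicShift ν) :
    Ergodic shiftMap ν := by
  refine ⟨⟨measurable_shiftMap, hinv⟩, ⟨fun s hs hfs => ?_⟩⟩
  rw [Filter.eventuallyConst_set']
  rcases herg s hs hfs with h | h
  · exact Or.inl (ae_eq_empty.mpr h)
  · exact Or.inr (ae_eq_univ.mpr ((prob_compl_eq_zero_iff hs).mpr h))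

/-- If `μ ≪ ν`, both are shift-invariant probability measures and `ν` is ergodic,
then `μ = ν`. -/
lemma eq_of_absolutelyContinuous [Nonempty A] {μ ν : Measure (ℤ → A)}
    [IsProbabilityMeasure μ] [IsProbabilityMeasure ν]
    (hinvμ : μ.map shiftMap = μ) (hinvν : ν.map shiftMap = ν)
    (hergν : IsErgodicShift ν) (hac : μ ≪ ν) : μ = ν := by
  have herg : Ergodic shiftMap ν := ergodic_shift_of hinvν hergν
  have hae : (μ.rnDeriv ν) ∘ shiftMap =ᵐ[ν] μ.rnDeriv ν := by
    have h := shiftMap_embedding.rnDeriv_map μ ν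
    rw [hinvμ, hinvν] at h
    exact h
  obtain ⟨c, hc⟩ := herg.ae_eq_const_of_ae_eq_comp₀
    (Measure.measurable_rnDeriv μ ν).nullMeasurable hae
  have h1 : ∫⁻ x, μ.rnDeriv ν x ∂ν = 1 := by
    rw [Measure.lintegral_rnDeriv hac, measure_univ]
  have h2 : ∫⁻ x, μ.rnDeriv ν x ∂ν = c := by
    rw [lintegral_congr_ae hc]
    simp [Function.const, measure_univ]
  have hc1 : c = 1 := by rw [← h2, h1]
  rw [← Measure.rnDeriv_eq_one_iff_eq hac]
  refine hc.trans ?_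
  simp [hc1, Function.const]

/-- Two distinct ergodic shift-invariant probability measures are separated by a
shift-invariant measurable set. -/
lemma erg_dichotomy [Nonempty A] {μ ν : Measure (ℤ → A)}
    [IsProbabilityMeasure μ] [IsProbabilityMeasure ν]
    (hinvμ : μ.map shiftMap = μ) (hinvν : ν.map shiftMap = ν)
    (hergμ : IsErgodicShift μ) (hergν : IsErgodicShift ν) :
    μ = ν ∨ ∃ U : Set (ℤ → A), MeasurableSet U ∧ μ U = 1 ∧ ν U = 0 := by
  obtain ⟨S, hSm, hS1, hS2⟩ := Measure.mutuallySingular_singularPart μ ν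
  -- `μ.singularPart ν` vanishes on `S`, `ν` vanishes on `Sᶜ`.  Let `T = Sᶜ`.
  set T : Set (ℤ → A) := Sᶜ with hT
  have hTm : MeasurableSet T := hSm.compl
  have hνT : ν T = 0 := hS2
  have hspTc : μ.singularPart ν Tᶜ = 0 := by rwa [hT, compl_compl]
  -- saturate `T` under all shifts
  set U : Set (ℤ → A) := ⋃ n : ℤ, shiftN n ⁻¹' T with hU
  have hUm : MeasurableSet U :=
    MeasurableSet.iUnion fun n => hTm.preimage (measurable_shiftN n)
  have hUinv : shiftMap ⁻¹' U = U := by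
    ext x
    simp only [hU, Set.mem_preimage, Set.mem_iUnion]
    constructor
    · rintro ⟨n, hn⟩
      refine ⟨n + 1, ?_⟩
      have : shiftN (n + 1) x = shiftN n (shiftMap x) := by
        rw [← shiftN_comp_shiftMap]; rfl
      rwa [this]
    · rintro ⟨n, hn⟩
      refine ⟨n - 1, ?_⟩
      have : shiftN ((n - 1) + 1) x = shiftN (n - 1) (shiftMap x) := by
        rw [← shiftN_comp_shiftMap]; rfl
      have h2 : (n - 1) + 1 = n := by ring
      rw [h2] at this
      rw [← this]
      exact hn
  have hνU : ν U = 0 := by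
    refine measure_iUnion_null fun n => ?_
    have := map_shiftN_eq hinvν n
    calc ν (shiftN n ⁻¹' T) = (ν.map (shiftN n)) T := by
          rw [Measure.map_apply (measurable_shiftN n) hTm]
      _ = ν T := by rw [this]
      _ = 0 := hνT
  rcases hergμ U hUm hUinv with h0 | h1
  · -- `μ U = 0`, hence the singular part vanishes and `μ ≪ ν`
    left
    have hTU : T ⊆ U := by
      intro x hx
      have h0 : shiftN (0 : ℤ) x = x := funext fun k => by simp [shiftN]
      exact Set.mem_iUnion.mpr ⟨0, show shiftN (0:ℤ) x ∈ T from h0.symm ▸ hx⟩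
    have hspU : μ.singularPart ν U = 0 :=
      le_antisymm (le_trans (Measure.singularPart_le μ ν U) (le_of_eq h0)) (zero_le)
    have hspT : μ.singularPart ν T = 0 :=
      le_antisymm (le_trans (measure_mono hTU) (le_of_eq hspU)) (zero_le)
    have hsp : μ.singularPart ν = 0 := by
      ext s _
      have : μ.singularPart ν Set.univ = 0 := by
        have := measure_union_le (μ := μ.singularPart ν) T Tᶜ
        rw [Set.union_compl_self, hspT, hspTc, add_zero] at this
        exact le_antisymm this (zero_le)
      simp only [Measure.coe_zero, Pi.zero_apply]
      exact le_antisymm (le_trans (measure_mono (Set.subset_univ s)) (le_of_eq this)) (zero_le)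
    have hac : μ ≪ ν := (Measure.singularPart_eq_zero μ ν).mp hsp
    exact eq_of_absolutelyContinuous hinvμ hinvν hergν hac
  · exact Or.inr ⟨U, hUm, h1, hνU⟩

end Aux

/-- Theorem: a sequence of ergodic shift-invariant Borel probability measures on
`A^ℤ` which converges in the strong sense to a probability measure `μbar` is
eventually constant equal to `μbar`. -/
theorem eventually_constant_of_ergodic_strong_convergence
    {A : Type} [Fintype A] [Nonempty A] [MeasurableSpace A] [MeasurableSingletonClass A]
    (μ : ℕ → Measure (ℤ → A)) (μbar : Measure (ℤ → A))
    (hprob : ∀ n, IsProbabilityMeasure (μ n)) (hprobbar : IsProbabilityMeasure μbar)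
    (hinv : ∀ n, (μ n).map shiftMap = μ n)
    (herg : ∀ n, IsErgodicShift (μ n))
    (hstrong : ∀ ε : ℝ, 0 < ε → ∃ N : ℕ, ∀ n ≥ N, ∀ U : Set (ℤ → A),
      MeasurableSet U → |((μ n) U).toReal - (μbar U).toReal| ≤ ε) :
    ∃ N : ℕ, ∀ n ≥ N, μ n = μbar := by
  have := fun n => hprob n
  obtain ⟨N, hN⟩ := hstrong (1/3) (by norm_num)
  -- all measures with index `≥ N` coincide
  have key : ∀ m ≥ N, ∀ n ≥ N, μ m = μ n := by
    intro m hm n hn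
    rcases erg_dichotomy (hinv m) (hinv n) (herg m) (herg n) with h | ⟨U, hUm, hU1, hU0⟩
    · exact h
    · exfalso
      have h1 := hN m hm U hUm
      have h2 := hN n hn U hUm
      rw [hU1] at h1
      rw [hU0] at h2
      simp only [ENNReal.toReal_one, ENNReal.toReal_zero] at h1 h2
      rw [abs_le] at h1 h2
      linarith [h1.1, h1.2, h2.1, h2.2]
  refine ⟨N, fun n hn => ?_⟩
  -- `μ n = μbar` since the values agree on every measurable set
  ext s hs
  have hre : (μ n s).toReal = (μbar s).toReal := by
    by_contra hne
    have hpos : 0 < |(μ n s).toReal - (μbar s).toReal| := by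
      rw [abs_pos]; intro h; exact hne (by linarith)
    obtain ⟨M, hM⟩ := hstrong (|(μ n s).toReal - (μbar s).toReal| / 2) (by linarith)
    set m := max n M with hm
    have h1 : μ m = μ n := key m (le_trans hn (le_max_left n M)) n hn
    have h2 := hM m (le_max_right n M) s hs
    rw [h1] at h2
    linarith
  have h1 : μ n s ≠ ⊤ := measure_ne_top _ _
  have h2 : μbar s ≠ ⊤ := measure_ne_top _ _
  exact (ENNReal.toReal_eq_toReal_iff' h1 h2).mp hre
end

section
/- Let A be a finite nonempty alphabet and let X ⊆ A^ℤ be a shift space (a nonempty closed subset of A^ℤ = (ℤ → A) with S(X) = X, where (Sx)_k = x_{k+1}). For each i ≥ 0 let L_i(X) = {w ∈ A^i : w occurs as a block x_k⋯x_{k+i−1} of some x ∈ X}, and let L(X) = ∪_i L_i(X). For a word u ∈ A*, define the combinatorial density δ_X(uA*) = lim_{n→∞} (1/n) Σ_{i=0}^{n-1} card{w ∈ L_i(X) : u is a prefix of w} / card(L_i(X)), when the limit exists. Assume δ_X(uA*) exists for every u ∈ L(X). Then there exists a Borel probability measure μ on A^ℤ such that μ([u]) = δ_X(uA*) for every u ∈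 L(X), where [u] = {x ∈ A^ℤ : x_0⋯x_{|u|−1} = u}. -/
open Filter MeasureTheory

/-- The word `u` occurs as a block of some element of `X ⊆ A^ℤ`. -/
def occursIn {A : Type*} (X : Set (ℤ → A)) (u : List A) : Prop :=
  ∃ x ∈ X, ∃ k : ℤ, ∀ j : Fin u.length, x (k + (j.val : ℤ)) = u.get j

/-- The `n`-th Cesàro average of the proportion, among the words of length `i` of
the language of `X`, of those having `v` as a prefix:
`(1/n) ∑_{i<n} card{w ∈ L_i(X) : v prefix of w} / card L_i(X)`. -/
noncomputable def combAvg {A : Type*} (X : Set (ℤ → A)) (v : List A) (n : ℕ) : ℝ :=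
  (1 / n : ℝ) * ∑ i ∈ Finset.range n,
    ({w : List A | w.length = i ∧ occursIn X w ∧ v <+: w}.ncard : ℝ) /
    ({w : List A | w.length = i ∧ occursIn X w}.ncard : ℝ)

set_option linter.unusedSectionVars false
set_option linter.unusedVariables false

section UF
open ENNReal
noncomputable def UF : Ultrafilter ℕ := Ultrafilter.of atTop

noncomputable def ulim (a : ℕ → ℝ≥0∞) : ℝ≥0∞ := lim (UF.map a : Filter ℝ≥0∞)

lemma tendsto_ulim (a : ℕ → ℝ≥0∞) : Tendsto a (UF : Filter ℕ) (nhds (ulim a)) := by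
  have h : ∃ x, (UF.map a : Filter ℝ≥0∞) ≤ nhds x := by
    obtain ⟨x, -, h⟩ := (isCompact_univ (X := ℝ≥0∞)).ultrafilter_le_nhds (UF.map a)
      (by simp)
    exact ⟨x, h⟩
  exact le_nhds_lim h

lemma ulim_eq {a : ℕ → ℝ≥0∞} {x : ℝ≥0∞} (h : Tendsto a atTop (nhds x)) : ulim a = x :=
  tendsto_nhds_unique (tendsto_ulim a) (h.mono_left (Ultrafilter.of_le _))

lemma ulim_mono {a b : ℕ → ℝ≥0∞} (h : ∀ n, a n ≤ b n) : ulim a ≤ ulim b :=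
  le_of_tendsto_of_tendsto (tendsto_ulim a) (tendsto_ulim b) (Eventually.of_forall h)

lemma ulim_add (a b : ℕ → ℝ≥0∞) : ulim (fun n => a n + b n) = ulim a + ulim b :=
  tendsto_nhds_unique (tendsto_ulim _) ((tendsto_ulim a).add (tendsto_ulim b))

lemma ulim_const (x : ℝ≥0∞) : ulim (fun _ => x) = x := ulim_eq tendsto_const_nhds
end UF

section words
variable {A : Type} [Fintype A] [Nonempty A]

open Classical in
noncomputable def extPoint (X : Set (ℤ → A)) (w : List A) : ℤ → A :=
  if h : occursIn X w then fun j => h.choose (h.choose_spec.2.choose + j)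
  else fun _ => Classical.arbitrary A

lemma extPoint_spec {X : Set (ℤ → A)} {w : List A} (h : occursIn X w) (j : Fin w.length) :
    extPoint X w (j.val : ℤ) = w.get j := by
  simp only [extPoint, dif_pos h]
  exact h.choose_spec.2.choose_spec j

lemma WSet_finite (X : Set (ℤ → A)) (i : ℕ) :
    {w : List A | w.length = i ∧ occursIn X w}.Finite :=
  Set.Finite.subset (List.finite_length_eq (α := A) (n := i)) (fun _ hw => hw.1)

noncomputable def WFin (X : Set (ℤ → A)) (i : ℕ) : Finset (List A) :=
  (WSet_finite X i).toFinset

lemma mem_WFin {X : Set (ℤ → A)} {i : ℕ} {w : List A} :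
    w ∈ WFin X i ↔ w.length = i ∧ occursIn X w := Set.Finite.mem_toFinset _

lemma coe_WFin (X : Set (ℤ → A)) (i : ℕ) :
    (WFin X i : Set (List A)) = {w : List A | w.length = i ∧ occursIn X w} :=
  Set.Finite.coe_toFinset _

lemma WFin_nonempty {X : Set (ℤ → A)} (hXne : X.Nonempty) (i : ℕ) :
    (WFin X i).Nonempty := by
  obtain ⟨x, hx⟩ := hXne
  refine ⟨List.ofFn (fun j : Fin i => x (j.val : ℤ)), ?_⟩
  rw [mem_WFin]
  refine ⟨List.length_ofFn, x, hx, 0, fun j => ?_⟩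
  simp [List.get_ofFn]

lemma extPoint_mem_iff {X : Set (ℤ → A)} {u w : List A} (hw : occursIn X w)
    (hlen : u.length ≤ w.length) :
    (∀ j : Fin u.length, extPoint X w (j.val : ℤ) = u.get j) ↔ u <+: w := by
  constructor
  · intro h
    rw [List.prefix_iff_eq_take]
    apply List.ext_getElem (by simp [Nat.min_eq_left hlen])
    intro j h1 h2
    have := h ⟨j, h1⟩
    rw [extPoint_spec hw ⟨j, lt_of_lt_of_le h1 hlen⟩] at this
    simp only [List.get_eq_getElem] at this
    simp [List.getElem_take, this]
  · intro h j
    rw [extPoint_spec hw ⟨j.val, lt_of_lt_of_le j.2 hlen⟩]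
    simp only [List.get_eq_getElem]
    exact (h.getElem j.2).symm

end words

section meas
open ENNReal
variable {A : Type} [Fintype A] [Nonempty A] [MeasurableSpace A]

noncomputable def mun (X : Set (ℤ → A)) (n : ℕ) : Measure (ℤ → A) :=
  (n : ℝ≥0∞)⁻¹ • ∑ i ∈ Finset.range n,
    (((WFin X i).card : ℝ≥0∞)⁻¹ • ∑ w ∈ WFin X i, Measure.dirac (extPoint X w))

open Classical in
lemma mun_apply (X : Set (ℤ → A)) (n : ℕ) {s : Set (ℤ → A)} (hs : MeasurableSet s) :
    mun X n s = (n : ℝ≥0∞)⁻¹ * ∑ i ∈ Finset.range n,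
      (((WFin X i).card : ℝ≥0∞)⁻¹ *
        (((WFin X i).filter (fun w => extPoint X w ∈ s)).card : ℝ≥0∞)) := by
  simp only [mun, Measure.smul_apply, Measure.coe_finset_sum, Finset.sum_apply,
    Measure.dirac_apply' _ hs, smul_eq_mul]
  congr 1
  refine Finset.sum_congr rfl fun i _ => ?_
  congr 1
  rw [← Finset.sum_boole]
  refine Finset.sum_congr rfl fun w _ => ?_
  simp [Set.indicator_apply]

lemma mun_univ {X : Set (ℤ → A)} (hXne : X.Nonempty) {n : ℕ} (hn : 1 ≤ n) :
    mun X n Set.univ = 1 := by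
  simp only [mun, Measure.smul_apply, Measure.coe_finset_sum, Finset.sum_apply,
    Measure.dirac_apply_of_mem (Set.mem_univ _), smul_eq_mul, Finset.sum_const,
    nsmul_eq_mul, mul_one]
  have : ∀ i ∈ Finset.range n, ((WFin X i).card : ℝ≥0∞)⁻¹ * ((WFin X i).card : ℝ≥0∞) = 1 := by
    intro i _
    exact ENNReal.inv_mul_cancel
      (by exact_mod_cast Finset.card_ne_zero_of_mem (WFin_nonempty hXne i).choose_spec)
      (natCast_ne_top _)
  rw [Finset.sum_congr rfl this]
  simp only [Finset.sum_const, Finset.card_range, nsmul_eq_mul, mul_one]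
  exact ENNReal.inv_mul_cancel (by exact_mod_cast Nat.one_le_iff_ne_zero.mp hn)
    (natCast_ne_top _)

lemma mun_le_one (X : Set (ℤ → A)) (hXne : X.Nonempty) (n : ℕ) (s : Set (ℤ → A)) :
    mun X n s ≤ 1 := by
  rcases Nat.eq_zero_or_pos n with h | h
  · subst h
    simp [mun]
  · calc mun X n s ≤ mun X n Set.univ := measure_mono (Set.subset_univ s)
    _ = 1 := mun_univ hXne h
end meas

section cont
open ENNReal TopologicalSpace
variable {A : Type} [Fintype A] [Nonempty A]
  [TopologicalSpace A] [DiscreteTopology A] [MeasurableSpace A] [BorelSpace A]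

example : CompactSpace (ℤ → A) := inferInstance
example : T2Space (ℤ → A) := inferInstance
example : BorelSpace (ℤ → A) := inferInstance

lemma ulim_mun_ne_top (X : Set (ℤ → A)) (hXne : X.Nonempty) (s : Set (ℤ → A)) :
    ulim (fun n => mun X n s) ≠ ⊤ :=
  fun h => by
    have := (ulim_mono (fun n => mun_le_one X hXne n s)).trans_eq (ulim_const 1)
    rw [h] at this
    exact (ENNReal.one_lt_top.not_ge (by simpa using this))

noncomputable def shiftContent (X : Set (ℤ → A)) (hXne : X.Nonempty) :
    Content (ℤ → A) where
  toFun K := (ulim fun n => mun X n K).toNNReal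
  mono' K₁ K₂ h := ENNReal.toNNReal_mono (ulim_mun_ne_top X hXne _)
    (ulim_mono fun n => measure_mono h)
  sup_disjoint' K₁ K₂ hdisj _ h₂ := by
    have key : ∀ n, mun X n (↑(K₁ ⊔ K₂)) = mun X n K₁ + mun X n K₂ := fun n => by
      show mun X n (↑K₁ ∪ ↑K₂) = _
      exact measure_union hdisj h₂.measurableSet
    have : ulim (fun n => mun X n (↑(K₁ ⊔ K₂)))
        = ulim (fun n => mun X n K₁) + ulim (fun n => mun X n K₂) := by
      rw [← ulim_add]
      exact congrArg ulim (funext key)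
    have h1 := ulim_mun_ne_top X hXne (K₁ : Set (ℤ → A))
    have h2' := ulim_mun_ne_top X hXne (K₂ : Set (ℤ → A))
    show (ulim fun n => mun X n (↑(K₁ ⊔ K₂))).toNNReal
      = (ulim fun n => mun X n K₁).toNNReal + (ulim fun n => mun X n K₂).toNNReal
    rw [this, ENNReal.toNNReal_add h1 h2']
  sup_le' K₁ K₂ := by
    have key : ∀ n, mun X n (↑(K₁ ⊔ K₂)) ≤ mun X n K₁ + mun X n K₂ := fun n =>
      measure_union_le _ _
    show (ulim fun n => mun X n (↑(K₁ ⊔ K₂))).toNNReal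
      ≤ (ulim fun n => mun X n K₁).toNNReal + (ulim fun n => mun X n K₂).toNNReal
    rw [← ENNReal.toNNReal_add (ulim_mun_ne_top X hXne _) (ulim_mun_ne_top X hXne _)]
    exact ENNReal.toNNReal_mono
      (ENNReal.add_ne_top.mpr ⟨ulim_mun_ne_top X hXne _, ulim_mun_ne_top X hXne _⟩)
      ((ulim_mono key).trans_eq (ulim_add _ _))

lemma shiftContent_measure_apply (X : Set (ℤ → A)) (hXne : X.Nonempty)
    {K : Set (ℤ → A)} (hK₁ : IsCompact K) (hK₂ : IsOpen K) :
    (shiftContent X hXne).measure K = ulim (fun n => mun X n K) := by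
  rw [Content.measure_apply _ hK₂.measurableSet,
    Content.outerMeasure_of_isOpen _ K hK₂,
    Content.innerContent_of_isCompact _ hK₁ hK₂]
  exact coe_toNNReal (ulim_mun_ne_top X hXne K)
end cont


/-- Theorem: let `X` be a shift space such that the combinatorial density
`δ_X (u A*)` exists for every `u ∈ L(X)`. Then there is a Borel probability
measure `μ` on `A^ℤ` such that `μ [u] = δ_X (u A*)` for every `u ∈ L(X)`. -/
theorem exists_measure_of_combinatorialDensity
    {A : Type} [Fintype A] [Nonempty A]
    [TopologicalSpace A] [DiscreteTopology A] [MeasurableSpace A] [BorelSpace A]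
    (X : Set (ℤ → A)) (hXne : X.Nonempty) (hXclosed : IsClosed X)
    (hXinv : shiftMap '' X = X)
    (d : List A → ℝ)
    (hd : ∀ u : List A, occursIn X u → Tendsto (combAvg X u) atTop (nhds (d u))) :
    ∃ μ : Measure (ℤ → A), IsProbabilityMeasure μ ∧
      ∀ u : List A, occursIn X u →
        (μ {x : ℤ → A | ∀ j : Fin u.length, x (j.val : ℤ) = u.get j}).toReal = d u := by
  classical
  refine ⟨(shiftContent X hXne).measure, ⟨?_⟩, ?_⟩
  · rw [shiftContent_measure_apply X hXne isCompact_univ isOpen_univ]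
    refine ulim_eq (tendsto_const_nhds.congr' ?_)
    filter_upwards [eventually_ge_atTop 1] with n hn
    exact (mun_univ hXne hn).symm
  · intro u hu
    set C : Set (ℤ → A) := {x | ∀ j : Fin u.length, x (j.val : ℤ) = u.get j} with hC
    have hmemC : ∀ y : ℤ → A, y ∈ C ↔ ∀ j : Fin u.length, y (j.val : ℤ) = u.get j :=
      fun y => Iff.rfl
    have hCeq : C = ⋂ j : Fin u.length, (fun x : ℤ → A => x (j.val : ℤ)) ⁻¹' {u.get j} := by
      ext x
      simp [hC, Set.mem_iInter]
    have hCopen : IsOpen C := by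
      rw [hCeq]
      exact isOpen_iInter_of_finite fun j =>
        (isOpen_discrete _).preimage (continuous_apply _)
    have hCclosed : IsClosed C := by
      rw [hCeq]
      exact isClosed_iInter fun j => (isClosed_discrete _).preimage (continuous_apply _)
    have hCcompact : IsCompact C := hCclosed.isCompact
    rw [shiftContent_measure_apply X hXne hCcompact hCopen]
    set M := u.length with hM
    set tR : ℕ → ℝ := fun i =>
      (((WFin X i).filter fun w => extPoint X w ∈ C).card : ℝ) / ((WFin X i).card : ℝ)
      with htR
    set sR : ℕ → ℝ := fun i =>
      ({w : List A | w.length = i ∧ occursIn X w ∧ u <+: w}.ncard : ℝ) /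
      ({w : List A | w.length = i ∧ occursIn X w}.ncard : ℝ) with hsR
    have hterm : ∀ i, M ≤ i → sR i = tR i := by
      intro i hi
      have hset : {w : List A | w.length = i ∧ occursIn X w ∧ u <+: w}
          = (((WFin X i).filter fun w => extPoint X w ∈ C : Finset (List A)) :
              Set (List A)) := by
        ext w
        simp only [Finset.coe_filter, mem_WFin, Set.mem_setOf_eq]
        constructor
        · rintro ⟨h1, h2, h3⟩
          refine ⟨⟨h1, h2⟩, (hmemC _).mpr ?_⟩
          exact (extPoint_mem_iff h2 (h1 ▸ hi)).mpr h3
        · rintro ⟨⟨h1, h2⟩, h3⟩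
          exact ⟨h1, h2, (extPoint_mem_iff h2 (h1 ▸ hi)).mp ((hmemC _).mp h3)⟩
      have hset2 : {w : List A | w.length = i ∧ occursIn X w}
          = ((WFin X i : Finset (List A)) : Set (List A)) := (coe_WFin X i).symm
      rw [hsR, htR]
      simp only [hset, hset2, Set.ncard_coe_finset]
    have hcard_pos : ∀ i : ℕ, (0 : ℝ) < ((WFin X i).card : ℝ) := fun i =>
      Nat.cast_pos.mpr (Finset.card_pos.mpr (WFin_nonempty hXne i))
    have hA : ∀ n : ℕ, 1 ≤ n →
        mun X n C = ENNReal.ofReal ((n : ℝ)⁻¹ * ∑ i ∈ Finset.range n, tR i) := by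
      intro n hn
      have hn' : (0 : ℝ) < n := by exact_mod_cast hn
      rw [mun_apply X n hCopen.measurableSet, ENNReal.ofReal_mul (by positivity),
        ENNReal.ofReal_inv_of_pos hn', ENNReal.ofReal_natCast,
        ENNReal.ofReal_sum_of_nonneg (fun i _ => by
          rw [htR]; positivity)]
      congr 1
      refine Finset.sum_congr rfl fun i _ => ?_
      rw [htR]
      rw [ENNReal.ofReal_div_of_pos (hcard_pos i), ENNReal.ofReal_natCast,
        ENNReal.ofReal_natCast, div_eq_mul_inv, mul_comm]
      congr!
    set c : ℝ := ∑ i ∈ Finset.range M, (tR i - sR i) with hc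
    have hsplit : ∀ n : ℕ, M ≤ n →
        (n : ℝ)⁻¹ * ∑ i ∈ Finset.range n, tR i = combAvg X u n + c * (n : ℝ)⁻¹ := by
      intro n hn
      have h1 : ∑ i ∈ Finset.range M, (tR i - sR i) = ∑ i ∈ Finset.range n, (tR i - sR i) :=
        Finset.sum_subset (Finset.range_subset_range.mpr hn) (fun i _ hi => by
          rw [hterm i (le_of_not_gt (fun hlt => hi (Finset.mem_range.mpr hlt)))]
          ring)
      have h2 : ∑ i ∈ Finset.range n, tR i = (∑ i ∈ Finset.range n, sR i) + c := by
        rw [hc, h1, Finset.sum_sub_distrib]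
        ring
      rw [h2, combAvg, one_div]
      ring
    have hc0 : Tendsto (fun n : ℕ => combAvg X u n + c * (n : ℝ)⁻¹) atTop
        (nhds (d u + c * 0)) :=
      (hd u hu).add (tendsto_const_nhds.mul tendsto_inv_atTop_nhds_zero_nat)
    rw [mul_zero, add_zero] at hc0
    have hreal : Tendsto (fun n : ℕ => (n : ℝ)⁻¹ * ∑ i ∈ Finset.range n, tR i) atTop
        (nhds (d u)) := by
      refine hc0.congr' ?_
      filter_upwards [eventually_ge_atTop M] with n hn
      exact (hsplit n hn).symm
    have hENN : Tendsto (fun n => mun X n C) atTop (nhds (ENNReal.ofReal (d u))) := by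
      refine (ENNReal.tendsto_ofReal hreal).congr' ?_
      filter_upwards [eventually_ge_atTop 1] with n hn
      exact (hA n hn).symm
    rw [ulim_eq hENN]
    refine ENNReal.toReal_ofReal (ge_of_tendsto (hd u hu) ?_)
    filter_upwards with n
    rw [combAvg]
    positivity
end
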